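/- arXiv:0901.1025 — 3 statements merged into one kernel-verified Lean document; each statement's English description precedes it below -/
import Mathlib

section
/- Let u : C(K) → B(X) be a bounded unital homomorphism and v : Z → B(X) a bounded linear map from a Banach space Z whose image of the unit ball is R-bounded with R-bound R(v), such that u(f) v(z) = v(z) u(f) for all f ∈ C(K), z ∈ Z. Then there is a unique bounded linear map u·v : C(K; Z) → B(X) with (u·v)(f ⊗ z) = u(f) v(z), and ‖u·v‖ ≤ ‖u‖² R(v). -/
open Finset

/-- The Rademacher average, modelled on the uniform probability space `Fin n → Bool`. -/
noncomputable def radNorm {X : Type*} [NormedAddCommGroup X] [NormedSpace ℂ X]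
    {n : ℕ} (x : Fin n → X) : ℝ :=
  Real.sqrt ((∑ s : Fin n → Bool, ‖∑ k, (if s k then (1 : ℂ) else -1) • x k‖ ^ 2) / 2 ^ n)

/-- `τ ⊆ B(X)` is `R`-bounded with bound `C`. -/
def IsRBoundedWith {X : Type*} [NormedAddCommGroup X] [NormedSpace ℂ X]
    (C : ℝ) (τ : Set (X →L[ℂ] X)) : Prop :=
  0 ≤ C ∧ ∀ (n : ℕ) (T : Fin n → X →L[ℂ] X) (x : Fin n → X), (∀ k, T k ∈ τ) →
    radNorm (fun k => T k (x k)) ≤ C * radNorm x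

/-- The elementary tensor `f ⊗ z ∈ C(K; Z)`, i.e. the function `t ↦ f(t) z`. -/
noncomputable def tensorCM {K : Type*} [TopologicalSpace K] {Z : Type*} [NormedAddCommGroup Z]
    [NormedSpace ℂ Z] (f : C(K, ℂ)) (z : Z) : C(K, Z) :=
  ⟨fun t => f t • z, (map_continuous f).smul continuous_const⟩

namespace DotProd


def sgn {n : ℕ} (s : Fin n → Bool) (k : Fin n) : ℂ := if s k then 1 else -1

lemma radNorm_eq {X : Type*} [NormedAddCommGroup X] [NormedSpace ℂ X]
    {n : ℕ} (x : Fin n → X) :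
    radNorm x = Real.sqrt ((∑ s : Fin n → Bool, ‖∑ k, sgn s k • x k‖ ^ 2) / 2 ^ n) := rfl

lemma norm_sgn {n : ℕ} (s : Fin n → Bool) (k : Fin n) : ‖sgn s k‖ = 1 := by
  unfold sgn; split <;> simp

lemma sgn_mul_self {n : ℕ} (s : Fin n → Bool) (k : Fin n) : sgn s k * sgn s k = 1 := by
  unfold sgn; split <;> ring

lemma card_bool_fun (n : ℕ) : Fintype.card (Fin n → Bool) = 2 ^ n := by
  simp [Fintype.card_fun]

lemma sum_sgn_mul {n : ℕ} (l m : Fin n) :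
    ∑ s : Fin n → Bool, sgn s l * sgn s m = if l = m then ((2:ℂ) ^ n) else 0 := by
  rcases eq_or_ne l m with rfl | hne
  · simp only [if_pos rfl]
    rw [Finset.sum_congr rfl (fun s _ => sgn_mul_self s l)]
    simp [card_bool_fun]
  · rw [if_neg hne]
    refine Finset.sum_involution (fun s _ => Function.update s l (! s l)) ?_ ?_ ?_ ?_
    · intro s _
      have h1 : sgn (Function.update s l (! s l)) l = - sgn s l := by
        unfold sgn
        rw [Function.update_self]
        cases hsl : s l <;> simp
      have h2 : sgn (Function.update s l (! s l)) m = sgn s m := by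
        unfold sgn; rw [Function.update_of_ne (Ne.symm hne)]
      rw [h1, h2]; ring
    · intro s _ _ hcon
      have := congrFun hcon l
      rw [Function.update_self] at this
      exact (Bool.not_ne_self (s l)) this
    · intro s _; exact Finset.mem_univ _
    · intro s _
      funext k
      rcases eq_or_ne k l with rfl | hk
      · rw [Function.update_self, Function.update_self, Bool.not_not]
      · rw [Function.update_of_ne hk, Function.update_of_ne hk]

variable {X : Type*} [NormedAddCommGroup X] [NormedSpace ℂ X]

lemma radNorm_nonneg {n : ℕ} (x : Fin n → X) : 0 ≤ radNorm x := Real.sqrt_nonneg _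

lemma radNorm_le {n : ℕ} (x : Fin n → X) {M : ℝ} (hM : 0 ≤ M)
    (h : ∀ s : Fin n → Bool, ‖∑ k, sgn s k • x k‖ ≤ M) : radNorm x ≤ M := by
  rw [radNorm_eq]
  have h1 : (∑ s : Fin n → Bool, ‖∑ k, sgn s k • x k‖ ^ 2) ≤ (2:ℝ) ^ n * M ^ 2 := by
    calc (∑ s : Fin n → Bool, ‖∑ k, sgn s k • x k‖ ^ 2)
        ≤ ∑ s : Fin n → Bool, M ^ 2 := by
          apply Finset.sum_le_sum
          intro s _
          exact pow_le_pow_left₀ (norm_nonneg _) (h s) 2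
      _ = (2:ℝ) ^ n * M ^ 2 := by
          rw [Finset.sum_const]
          simp [card_bool_fun]
  have h2 : (∑ s : Fin n → Bool, ‖∑ k, sgn s k • x k‖ ^ 2) / 2 ^ n ≤ M ^ 2 := by
    rw [div_le_iff₀ (by positivity)]
    linarith [h1]
  calc Real.sqrt ((∑ s : Fin n → Bool, ‖∑ k, sgn s k • x k‖ ^ 2) / 2 ^ n)
      ≤ Real.sqrt (M ^ 2) := Real.sqrt_le_sqrt h2
    _ = M := Real.sqrt_sq hM

lemma radNorm_smul {n : ℕ} (x : Fin n → X) {c : ℝ} (hc : 0 ≤ c) :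
    radNorm (fun k => (c:ℂ) • x k) = c * radNorm x := by
  rw [radNorm_eq, radNorm_eq]
  have : ∀ s : Fin n → Bool,
      ‖∑ k, sgn s k • (c:ℂ) • x k‖ ^ 2 = c ^ 2 * ‖∑ k, sgn s k • x k‖ ^ 2 := by
    intro s
    have : (∑ k, sgn s k • (c:ℂ) • x k) = (c:ℂ) • ∑ k, sgn s k • x k := by
      rw [Finset.smul_sum]
      congr 1; funext k; rw [smul_comm]
    rw [this, norm_smul]
    simp [Complex.norm_real, abs_of_nonneg hc]
    ring
  rw [Finset.sum_congr rfl (fun s _ => this s), ← Finset.mul_sum]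
  rw [mul_div_assoc, Real.sqrt_mul (by positivity), Real.sqrt_sq hc]

lemma avg_le_radNorm {n : ℕ} (x : Fin n → X) :
    (∑ s : Fin n → Bool, ‖∑ k, sgn s k • x k‖) / 2 ^ n ≤ radNorm x := by
  rw [radNorm_eq]
  set b : (Fin n → Bool) → ℝ := fun s => ‖∑ k, sgn s k • x k‖ with hb
  have hb0 : ∀ s, 0 ≤ b s := fun s => norm_nonneg _
  have hcs : (∑ s, b s) ^ 2 ≤ (2:ℝ) ^ n * ∑ s, (b s) ^ 2 := by
    have := Finset.sum_mul_sq_le_sq_mul_sq Finset.univ b (fun _ => (1:ℝ))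
    simp only [mul_one, one_pow] at this
    calc (∑ s, b s) ^ 2 ≤ (∑ s, (b s) ^ 2) * (∑ _s : Fin n → Bool, (1:ℝ)) := this
      _ = (2:ℝ) ^ n * ∑ s, (b s) ^ 2 := by
          rw [Finset.sum_const]; simp [card_bool_fun]; ring
  have hnn : 0 ≤ (∑ s, b s) / 2 ^ n := by positivity
  rw [Real.le_sqrt hnn (by positivity)]
  rw [div_pow]
  rw [div_le_div_iff₀ (by positivity) (by positivity)]
  calc (∑ s, b s) ^ 2 * 2 ^ n ≤ ((2:ℝ) ^ n * ∑ s, (b s) ^ 2) * 2 ^ n := by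
        apply mul_le_mul_of_nonneg_right hcs (by positivity)
    _ = (∑ s, (b s) ^ 2) * ((2:ℝ) ^ n) ^ 2 := by ring




/-- 1-D trapezoid bump for cell `j` of the lattice with offset `o` and mesh `a`,
  with ramp width `κ`, vanishing within `κ` of the boundary region. -/
noncomputable def g1 (a κ o : ℝ) (j : ℤ) (ξ : ℝ) : ℝ :=
  max 0 (min 1 (1 - (max ((o + j*a + 2*κ) - ξ) (ξ - (o + (j+1)*a - 2*κ)))/κ))

lemma g1_continuous (a κ o : ℝ) (j : ℤ) : Continuous (g1 a κ o j) := by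
  unfold g1
  apply continuous_const.max
  apply continuous_const.min
  apply continuous_const.sub
  apply Continuous.div_const
  exact ((continuous_const.sub continuous_id).max (continuous_id.sub continuous_const))

lemma g1_nonneg (a κ o : ℝ) (j : ℤ) (ξ : ℝ) : 0 ≤ g1 a κ o j ξ := le_max_left _ _

lemma g1_le_one (a κ o : ℝ) (j : ℤ) (ξ : ℝ) : g1 a κ o j ξ ≤ 1 := by
  unfold g1
  apply max_le (zero_le_one)
  exact min_le_left _ _

lemma g1_mem {a κ o : ℝ} (hκ : 0 < κ) {j : ℤ} {ξ : ℝ} (h : g1 a κ o j ξ ≠ 0) :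
    o + j*a + κ < ξ ∧ ξ < o + (j+1)*a - κ := by
  unfold g1 at h
  have hpos : 0 < min 1 (1 - (max ((o + j*a + 2*κ) - ξ) (ξ - (o + (j+1)*a - 2*κ)))/κ) := by
    by_contra hcon
    push_neg at hcon
    rw [max_eq_left hcon] at h
    exact h rfl
  have h2 : 0 < 1 - (max ((o + j*a + 2*κ) - ξ) (ξ - (o + (j+1)*a - 2*κ)))/κ :=
    lt_of_lt_of_le hpos (min_le_right _ _)
  have h3 : (max ((o + j*a + 2*κ) - ξ) (ξ - (o + (j+1)*a - 2*κ))) < κ := by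
    have := (div_lt_one hκ).mp (by linarith)
    linarith
  have h3' := (max_lt_iff.mp h3)
  constructor <;> nlinarith [h3'.1, h3'.2]

lemma g1_one {a κ o : ℝ} (hκ : 0 < κ) {j : ℤ} {ξ : ℝ}
    (h₁ : o + j*a + 2*κ ≤ ξ) (h₂ : ξ ≤ o + (j+1)*a - 2*κ) : g1 a κ o j ξ = 1 := by
  unfold g1
  have he : (max ((o + j*a + 2*κ) - ξ) (ξ - (o + (j+1)*a - 2*κ))) ≤ 0 := by
    apply max_le <;> linarith
  have : 1 ≤ 1 - (max ((o + j*a + 2*κ) - ξ) (ξ - (o + (j+1)*a - 2*κ)))/κ := by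
    have : (max ((o + j*a + 2*κ) - ξ) (ξ - (o + (j+1)*a - 2*κ)))/κ ≤ 0 :=
      div_nonpos_of_nonpos_of_nonneg he hκ.le
    linarith
  rw [min_eq_left this, max_eq_right zero_le_one]

lemma g1_floor {a κ o : ℝ} (ha : 0 < a) (hκ : 0 < κ) {j : ℤ} {ξ : ℝ}
    (h : g1 a κ o j ξ ≠ 0) : ⌊(ξ - o)/a⌋ = j := by
  obtain ⟨h1, h2⟩ := g1_mem hκ h
  rw [Int.floor_eq_iff]
  constructor
  · rw [le_div_iff₀ ha]; nlinarith
  · rw [div_lt_iff₀ ha]; nlinarith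





noncomputable def q1 (a κ o : ℝ) (B : ℤ) (ξ : ℝ) : ℝ :=
  ∑ j ∈ Finset.Icc (-B) B, (g1 a κ o j ξ)^2

lemma q1_nonneg (a κ o : ℝ) (B : ℤ) (ξ : ℝ) : 0 ≤ q1 a κ o B ξ :=
  Finset.sum_nonneg (fun j _ => sq_nonneg _)

lemma g1_eq_zero_of_ne_floor {a κ o : ℝ} (ha : 0 < a) (hκ : 0 < κ) {j : ℤ} {ξ : ℝ}
    (h : j ≠ ⌊(ξ - o)/a⌋) : g1 a κ o j ξ = 0 := by
  by_contra hcon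
  exact h (g1_floor ha hκ hcon).symm

lemma q1_le_one {a κ o : ℝ} (ha : 0 < a) (hκ : 0 < κ) (B : ℤ) (ξ : ℝ) :
    q1 a κ o B ξ ≤ 1 := by
  unfold q1
  by_cases hmem : ⌊(ξ - o)/a⌋ ∈ Finset.Icc (-B) B
  · rw [Finset.sum_eq_single_of_mem ⌊(ξ - o)/a⌋ hmem
      (fun b _ hb => by rw [g1_eq_zero_of_ne_floor ha hκ hb]; ring)]
    have h1 := g1_le_one a κ o ⌊(ξ - o)/a⌋ ξ
    have h2 := g1_nonneg a κ o ⌊(ξ - o)/a⌋ ξ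
    nlinarith
  · rw [Finset.sum_eq_zero]
    · exact zero_le_one
    · intro j hj
      have hne : j ≠ ⌊(ξ - o)/a⌋ := by
        intro hcon; rw [hcon] at hj; exact hmem hj
      rw [g1_eq_zero_of_ne_floor ha hκ hne]; ring

lemma floor_bounds {a o ξ : ℝ} (ha : 0 < a) :
    o + (⌊(ξ - o)/a⌋ : ℤ)*a ≤ ξ ∧ ξ < o + ((⌊(ξ - o)/a⌋ : ℤ)+1)*a := by
  have h1 : ((⌊(ξ - o)/a⌋ : ℤ) : ℝ) ≤ (ξ - o)/a := Int.floor_le _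
  have h2 : (ξ - o)/a < (⌊(ξ - o)/a⌋ : ℤ) + 1 := Int.lt_floor_add_one _
  constructor
  · nlinarith [(le_div_iff₀ ha).mp h1]
  · nlinarith [(div_lt_iff₀ ha).mp h2]

lemma q1_one {a κ o : ℝ} (ha : 0 < a) (hκ : 0 < κ) {B : ℤ} {ξ : ℝ}
    (hmem : ⌊(ξ - o)/a⌋ ∈ Finset.Icc (-B) B)
    (hfar : ∀ nn : ℤ, 2*κ ≤ |ξ - (o + nn*a)|) :
    q1 a κ o B ξ = 1 := by
  obtain ⟨hf1, hf2⟩ := floor_bounds (o := o) (ξ := ξ) ha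
  have hlow : o + (⌊(ξ - o)/a⌋:ℤ)*a + 2*κ ≤ ξ := by
    have h := hfar ⌊(ξ - o)/a⌋
    have habs : |ξ - (o + (⌊(ξ - o)/a⌋:ℤ)*a)| = ξ - (o + (⌊(ξ - o)/a⌋:ℤ)*a) :=
      abs_of_nonneg (by linarith)
    rw [habs] at h; linarith
  have hhigh : ξ ≤ o + ((⌊(ξ - o)/a⌋:ℤ)+1)*a - 2*κ := by
    have h := hfar (⌊(ξ - o)/a⌋ + 1)
    have habs : |ξ - (o + ((⌊(ξ - o)/a⌋:ℤ)+1)*a)| = (o + ((⌊(ξ - o)/a⌋:ℤ)+1)*a) - ξ := by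
      rw [abs_of_nonpos (by linarith)]; ring
    push_cast at h habs ⊢
    rw [habs] at h
    linarith
  unfold q1
  rw [Finset.sum_eq_single_of_mem ⌊(ξ - o)/a⌋ hmem
    (fun b _ hb => by rw [g1_eq_zero_of_ne_floor ha hκ hb]; ring)]
  rw [g1_one hκ hlow hhigh]; ring

lemma q1_ne_one_near {a κ o : ℝ} (ha : 0 < a) (hκ : 0 < κ) {B : ℤ} {ξ : ℝ}
    (hmem : ⌊(ξ - o)/a⌋ ∈ Finset.Icc (-B) B)
    (h : q1 a κ o B ξ ≠ 1) :
    ∃ nn : ℤ, |ξ - (o + nn*a)| < 2*κ := by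
  by_contra hcon
  push_neg at hcon
  exact h (q1_one ha hκ hmem hcon)

lemma floor_mem_Icc {a o R ξ : ℝ} (ha : 0 < a) (ho : 0 ≤ o) (hoa : o ≤ a)
    (hR : 0 ≤ R) (hξ : |ξ| ≤ R) :
    ⌊(ξ - o)/a⌋ ∈ Finset.Icc (-(⌈R/a⌉ + 2)) (⌈R/a⌉ + 2) := by
  rw [Finset.mem_Icc]
  obtain ⟨hξ1, hξ2⟩ := abs_le.mp hξ
  have hceil : R/a ≤ (⌈R/a⌉ : ℝ) := Int.le_ceil _
  have hceil0 : (0:ℝ) ≤ (⌈R/a⌉ : ℝ) := le_trans (by positivity) hceil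
  constructor
  · rw [Int.le_floor]
    push_cast
    rw [le_div_iff₀ ha]
    have hRa : R/a * a = R := div_mul_cancel₀ R (ne_of_gt ha)
    nlinarith
  · have h2 : (ξ - o)/a < (⌈R/a⌉:ℝ) + 2 := by
      rw [div_lt_iff₀ ha]
      have hRa : R/a * a = R := div_mul_cancel₀ R (ne_of_gt ha)
      nlinarith
    calc ⌊(ξ - o)/a⌋ ≤ ⌊(⌈R/a⌉:ℝ) + 2⌋ := Int.floor_le_floor h2.le
      _ = ⌈R/a⌉ + 2 := by
          rw [show ((⌈R/a⌉:ℝ) + 2) = ((⌈R/a⌉ + 2 : ℤ) : ℝ) by push_cast; ring]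
          exact Int.floor_intCast _

lemma lattice_sep {N : ℕ} (hN : 0 < N) {r r' : ℕ} (hrN : r < N) (hr'N : r' < N)
    (hne : r ≠ r') {a : ℝ} (ha : 0 < a) {ξ : ℝ} {nn nn' : ℤ}
    (h1 : |ξ - ((r:ℝ)*a/N + nn*a)| < 2*(a/(8*N)))
    (h2 : |ξ - ((r':ℝ)*a/N + nn'*a)| < 2*(a/(8*N))) : False := by
  have hNR : (0:ℝ) < N := by exact_mod_cast hN
  set e : ℤ := (r':ℤ) - r + N*(nn' - nn) with he
  have hd : ((r':ℝ)*a/N + nn'*a) - ((r:ℝ)*a/N + nn*a) = (e:ℝ) * (a/N) := by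
    rw [he]
    push_cast
    field_simp
    ring
  have habs : |(e:ℝ) * (a/N)| < 4*(a/(8*N)) := by
    have := abs_sub_abs_le_abs_sub (ξ - ((r:ℝ)*a/N + nn*a)) (ξ - ((r':ℝ)*a/N + nn'*a))
    have htri : |((r':ℝ)*a/N + nn'*a) - ((r:ℝ)*a/N + nn*a)|
        ≤ |ξ - ((r:ℝ)*a/N + nn*a)| + |ξ - ((r':ℝ)*a/N + nn'*a)| := by
      calc |((r':ℝ)*a/N + nn'*a) - ((r:ℝ)*a/N + nn*a)|
          = |(ξ - ((r:ℝ)*a/N + nn*a)) - (ξ - ((r':ℝ)*a/N + nn'*a))| := by ring_nf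
        _ ≤ _ := abs_sub _ _
    rw [hd] at htri
    linarith
  have hankpos : (0:ℝ) < a/N := div_pos ha hNR
  have hea : |(e:ℝ)| * (a/N) < 4*(a/(8*N)) := by
    rwa [abs_mul, abs_of_pos hankpos] at habs
  have h48 : 4*(a/(8*N)) = (1/2) * (a/N) := by field_simp; ring
  rw [h48] at hea
  have heabs : |(e:ℝ)| < 1/2 := (mul_lt_mul_iff_left₀ hankpos).mp hea
  have he0 : e = 0 := by
    have h1 : |(e:ℝ)| < 1 := by linarith
    have h2 : |e| < 1 := by exact_mod_cast h1
    have h3 := abs_lt.mp h2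
    omega
  rw [he] at he0
  have hk : (r':ℤ) - (r:ℤ) = (N:ℤ) * (nn - nn') := by linear_combination he0
  have hrr' : ((r:ℤ) ≠ (r':ℤ)) := by exact_mod_cast hne
  rcases eq_or_ne (nn - nn') 0 with h0 | h0
  · rw [h0, mul_zero] at hk
    omega
  · have h1 : (1:ℤ) ≤ |nn - nn'| := Int.one_le_abs h0
    have hN1 : (0:ℤ) < (N:ℤ) := by exact_mod_cast hN
    have hNk : (N:ℤ) ≤ |(N:ℤ) * (nn - nn')| := by
      rw [abs_mul, abs_of_nonneg hN1.le]
      nlinarith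
    rw [← hk] at hNk
    have hlt : |(r':ℤ) - (r:ℤ)| < (N:ℤ) := by
      rw [abs_lt]
      omega
    omega



section Multi

variable {K : Type*} [TopologicalSpace K] [CompactSpace K]
variable {D : Type*} [Fintype D] [DecidableEq D]

/-- multi-dimensional bump for cell `m`. -/
noncomputable def Gcm (co : D → C(K, ℝ)) (a κ o : ℝ) (m : D → ℤ) : C(K, ℂ) :=
  ⟨fun t => ((∏ d, g1 a κ o (m d) (co d t) : ℝ) : ℂ), by
    apply Complex.continuous_ofReal.comp
    apply continuous_finset_prod
    intro d _
    exact (g1_continuous a κ o (m d)).comp (map_continuous (co d))⟩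

noncomputable def cellSet (D : Type*) [Fintype D] [DecidableEq D] (B : ℤ) : Finset (D → ℤ) :=
  Fintype.piFinset (fun _ : D => Finset.Icc (-B) B)

noncomputable def sigmaCM (co : D → C(K, ℝ)) (a κ o : ℝ) (B : ℤ) : C(K, ℂ) :=
  ∑ m ∈ cellSet D B, Gcm co a κ o m * Gcm co a κ o m

lemma Gcm_apply (co : D → C(K, ℝ)) (a κ o : ℝ) (m : D → ℤ) (t : K) :
    Gcm co a κ o m t = ((∏ d, g1 a κ o (m d) (co d t) : ℝ) : ℂ) := rfl

lemma Gcm_single {co : D → C(K, ℝ)} {a κ o : ℝ} (ha : 0 < a) (hκ : 0 < κ)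
    {m : D → ℤ} {t : K} (h : Gcm co a κ o m t ≠ 0) :
    m = fun d => ⌊(co d t - o)/a⌋ := by
  rw [Gcm_apply] at h
  have hprod : (∏ d, g1 a κ o (m d) (co d t)) ≠ 0 := by
    intro hcon; rw [hcon] at h; exact h (by norm_num)
  funext d
  have hd : g1 a κ o (m d) (co d t) ≠ 0 := by
    intro hcon
    exact hprod (Finset.prod_eq_zero (Finset.mem_univ d) hcon)
  exact (g1_floor ha hκ hd).symm

lemma Gcm_nonneg_re (co : D → C(K, ℝ)) (a κ o : ℝ) (m : D → ℤ) (t : K) :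
    0 ≤ ∏ d, g1 a κ o (m d) (co d t) :=
  Finset.prod_nonneg (fun d _ => g1_nonneg _ _ _ _ _)

lemma Gcm_le_one_re (co : D → C(K, ℝ)) (a κ o : ℝ) (m : D → ℤ) (t : K) :
    ∏ d, g1 a κ o (m d) (co d t) ≤ 1 :=
  Finset.prod_le_one (fun d _ => g1_nonneg _ _ _ _ _) (fun d _ => g1_le_one _ _ _ _ _)

lemma Gcm_norm_le_one (co : D → C(K, ℝ)) (a κ o : ℝ) (m : D → ℤ) :
    ‖Gcm co a κ o m‖ ≤ 1 := by
  rw [ContinuousMap.norm_le _ zero_le_one]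
  intro t
  rw [Gcm_apply, Complex.norm_real, Real.norm_of_nonneg (Gcm_nonneg_re co a κ o m t)]
  exact Gcm_le_one_re co a κ o m t

lemma Gcm_mul_eq_zero {co : D → C(K, ℝ)} {a κ o : ℝ} (ha : 0 < a) (hκ : 0 < κ)
    {m m' : D → ℤ} (h : m ≠ m') :
    Gcm co a κ o m * Gcm co a κ o m' = 0 := by
  ext t
  rw [ContinuousMap.mul_apply, ContinuousMap.zero_apply]
  by_cases h1 : Gcm co a κ o m t = 0
  · rw [h1, zero_mul]
  · by_cases h2 : Gcm co a κ o m' t = 0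
    · rw [h2, mul_zero]
    · exact absurd ((Gcm_single ha hκ h1).trans (Gcm_single ha hκ h2).symm) h

lemma sigmaCM_apply (co : D → C(K, ℝ)) (a κ o : ℝ) (B : ℤ) (t : K) :
    sigmaCM co a κ o B t = ((∏ d, q1 a κ o B (co d t) : ℝ) : ℂ) := by
  unfold sigmaCM q1
  rw [ContinuousMap.sum_apply]
  have : ∀ m ∈ cellSet D B, (Gcm co a κ o m * Gcm co a κ o m) t
      = ((∏ d, (g1 a κ o (m d) (co d t))^2 : ℝ) : ℂ) := by
    intro m _
    rw [ContinuousMap.mul_apply, Gcm_apply]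
    push_cast
    rw [← Finset.prod_mul_distrib]
    exact Finset.prod_congr rfl (fun d _ => by ring)
  rw [Finset.sum_congr rfl this]
  rw [Finset.prod_univ_sum (fun _ : D => Finset.Icc (-B) B)
    (fun d j => (g1 a κ o j (co d t))^2)]
  unfold cellSet
  push_cast
  rfl

-- oscillation within a cell
lemma Gcm_osc {co : D → C(K, ℝ)} {a κ o : ℝ} (hκ : 0 < κ)
    {m : D → ℤ} {t t' : K} (h : Gcm co a κ o m t ≠ 0) (h' : Gcm co a κ o m t' ≠ 0)
    (d : D) : |co d t - co d t'| < a := by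
  have hfac : ∀ {s : K}, Gcm co a κ o m s ≠ 0 → g1 a κ o (m d) (co d s) ≠ 0 := by
    intro s hs
    rw [Gcm_apply] at hs
    intro hcon
    apply hs
    rw [Finset.prod_eq_zero (Finset.mem_univ d) hcon]
    norm_num
  obtain ⟨h1, h2⟩ := g1_mem hκ (hfac h)
  obtain ⟨h1', h2'⟩ := g1_mem hκ (hfac h')
  rw [abs_lt]
  constructor <;> nlinarith

end Multi

-- elementary inequalities
lemma one_sub_prod_le_sum {ι : Type*} (s : Finset ι) (q : ι → ℝ)
    (h0 : ∀ i ∈ s, 0 ≤ q i) (h1 : ∀ i ∈ s, q i ≤ 1) :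
    1 - ∏ i ∈ s, q i ≤ ∑ i ∈ s, (1 - q i) := by
  induction s using Finset.cons_induction with
  | empty => simp
  | cons j s hj ih =>
    rw [Finset.prod_cons, Finset.sum_cons]
    have hq0 : 0 ≤ q j := h0 j (Finset.mem_cons_self j s)
    have hq1 : q j ≤ 1 := h1 j (Finset.mem_cons_self j s)
    have ihs := ih (fun i hi => h0 i (Finset.mem_cons_of_mem hi))
      (fun i hi => h1 i (Finset.mem_cons_of_mem hi))
    have hprod0 : 0 ≤ ∏ i ∈ s, q i :=
      Finset.prod_nonneg (fun i hi => h0 i (Finset.mem_cons_of_mem hi))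
    have hprod1 : ∏ i ∈ s, q i ≤ 1 :=
      Finset.prod_le_one (fun i hi => h0 i (Finset.mem_cons_of_mem hi))
        (fun i hi => h1 i (Finset.mem_cons_of_mem hi))
    nlinarith

lemma sum_le_one_of_pairwise_zero {ι : Type*} [Fintype ι] (β : ι → ℝ)
    (h0 : ∀ i, 0 ≤ β i) (h1 : ∀ i, β i ≤ 1)
    (hp : ∀ i j, i ≠ j → β i = 0 ∨ β j = 0) : ∑ i, β i ≤ 1 := by
  by_cases hall : ∀ i, β i = 0
  · rw [Finset.sum_eq_zero (fun i _ => hall i)]; exact zero_le_one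
  · push_neg at hall
    obtain ⟨i₀, hi₀⟩ := hall
    rw [Finset.sum_eq_single i₀]
    · exact h1 i₀
    · intro j _ hj
      rcases hp j i₀ hj with h | h
      · exact h
      · exact absurd h hi₀
    · intro h; exact absurd (Finset.mem_univ i₀) h


variable {K : Type*} [TopologicalSpace K] [CompactSpace K]
variable {Z : Type*} [NormedAddCommGroup Z] [NormedSpace ℂ Z]

lemma core_system
    (u : C(K, ℂ) →L[ℂ] (X →L[ℂ] X))
    (hu_mul : ∀ f g : C(K, ℂ), u (f * g) = u f * u g)
    (v : Z →L[ℂ] (X →L[ℂ] X)) (C : ℝ)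
    (hC : IsRBoundedWith C {T : X →L[ℂ] X | ∃ z : Z, ‖z‖ ≤ 1 ∧ T = v z})
    (hcomm : ∀ (f : C(K, ℂ)) (z : Z), u f * v z = v z * u f)
    {n : ℕ} (G : Fin n → C(K, ℂ)) (w : Fin n → Z) (c : ℝ) (hc : 0 ≤ c)
    (hdisj : ∀ l m, l ≠ m → G l * G m = 0)
    (hG1 : ∀ l, ‖G l‖ ≤ 1)
    (hw : ∀ l, ‖w l‖ ≤ c) (x : X) :
    ‖∑ l, (u (G l * G l)) (v (w l) x)‖ ≤ ‖u‖ ^ 2 * C * c * ‖x‖ := by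
  classical
  set M : ℝ := ‖u‖ with hM
  -- pointwise: at most one l with G l t ≠ 0
  have hpt : ∀ (t : K) (l m : Fin n), l ≠ m → G l t = 0 ∨ G m t = 0 := by
    intro t l m hlm
    have := congrArg (fun (f : C(K,ℂ)) => f t) (hdisj l m hlm)
    simp only [ContinuousMap.mul_apply, ContinuousMap.zero_apply] at this
    exact mul_eq_zero.mp this
  -- flatness
  have flat : ∀ (cc : Fin n → ℂ), (∀ l, ‖cc l‖ ≤ 1) → ‖∑ l, cc l • G l‖ ≤ 1 := by
    intro cc hcc
    rw [ContinuousMap.norm_le _ zero_le_one]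
    intro t
    have hap : (∑ l, cc l • G l) t = ∑ l, cc l * G l t := by
      rw [ContinuousMap.sum_apply]
      simp [ContinuousMap.smul_apply, smul_eq_mul]
    rw [hap]
    by_cases hall : ∀ l, G l t = 0
    · simp [hall]
    · push_neg at hall
      obtain ⟨l₀, hl₀⟩ := hall
      rw [Finset.sum_eq_single l₀]
      · calc ‖cc l₀ * G l₀ t‖ = ‖cc l₀‖ * ‖G l₀ t‖ := norm_mul _ _
          _ ≤ 1 * 1 := by
              apply mul_le_mul (hcc l₀) ?_ (norm_nonneg _) zero_le_one
              exact le_trans (ContinuousMap.norm_coe_le_norm _ t) (hG1 l₀)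
          _ = 1 := one_mul 1
      · intro b _ hb
        rcases hpt t b l₀ hb with h | h
        · rw [h, mul_zero]
        · exact absurd h hl₀
      · intro h; exact absurd (Finset.mem_univ l₀) h
  -- the Rademacher functions
  set gg : (Fin n → Bool) → C(K, ℂ) := fun s => ∑ l, sgn s l • G l with hgg
  set Bs : (Fin n → Bool) → X := fun s => ∑ l, sgn s l • (v (w l) (u (G l) x)) with hBs
  have hcomm' : ∀ (f : C(K,ℂ)) (z : Z) (y : X), v z (u f y) = u f (v z y) := by
    intro f z y
    have h := hcomm f z
    have := congrArg (fun (A : X →L[ℂ] X) => A y) h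
    simpa [ContinuousLinearMap.mul_apply] using this.symm
  have hdiag : ∀ m : Fin n, u (G m) (v (w m) (u (G m) x)) = u (G m * G m) (v (w m) x) := by
    intro m
    rw [hu_mul, ContinuousLinearMap.mul_apply, hcomm' (G m) (w m) x]
  -- key identity
  have key : ∑ s : Fin n → Bool, u (gg s) (Bs s)
      = (2:ℂ) ^ n • ∑ l, (u (G l * G l)) (v (w l) x) := by
    have hexp : ∀ s, u (gg s) (Bs s)
        = ∑ m, ∑ l, (sgn s m * sgn s l) • u (G m) (v (w l) (u (G l) x)) := by
      intro s
      rw [hgg]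
      simp only [map_sum, map_smul]
      rw [ContinuousLinearMap.sum_apply]
      congr 1
      funext m
      rw [ContinuousLinearMap.smul_apply, hBs]
      rw [map_sum]
      rw [Finset.smul_sum]
      congr 1
      funext l
      rw [map_smul, smul_smul]
    calc ∑ s : Fin n → Bool, u (gg s) (Bs s)
        = ∑ s : Fin n → Bool, ∑ m, ∑ l, (sgn s m * sgn s l) • u (G m) (v (w l) (u (G l) x)) := by
          exact Finset.sum_congr rfl (fun s _ => hexp s)
      _ = ∑ m, ∑ l, (∑ s : Fin n → Bool, sgn s m * sgn s l) • u (G m) (v (w l) (u (G l) x)) := by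
          rw [Finset.sum_comm]
          congr 1; funext m
          rw [Finset.sum_comm]
          congr 1; funext l
          rw [Finset.sum_smul]
      _ = ∑ m, (2:ℂ)^n • u (G m) (v (w m) (u (G m) x)) := by
          congr 1; funext m
          rw [Finset.sum_eq_single m]
          · rw [sum_sgn_mul, if_pos rfl]
          · intro l _ hl
            rw [sum_sgn_mul, if_neg (Ne.symm hl), zero_smul]
          · intro h; exact absurd (Finset.mem_univ m) h
      _ = (2:ℂ) ^ n • ∑ l, (u (G l * G l)) (v (w l) x) := by
          rw [Finset.smul_sum]
          exact Finset.sum_congr rfl (fun m _ => by rw [hdiag m])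
  have h2n : ((2:ℂ) ^ n) ≠ 0 := pow_ne_zero _ two_ne_zero
  have hS : ∑ l, (u (G l * G l)) (v (w l) x)
      = ((2:ℂ) ^ n)⁻¹ • ∑ s : Fin n → Bool, u (gg s) (Bs s) := by
    rw [key, smul_smul, inv_mul_cancel₀ h2n, one_smul]
  -- norm estimates
  have hsing : ∀ s, ‖u (gg s) (Bs s)‖ ≤ M * ‖Bs s‖ := by
    intro s
    calc ‖u (gg s) (Bs s)‖ ≤ ‖u (gg s)‖ * ‖Bs s‖ := ContinuousLinearMap.le_opNorm _ _
      _ ≤ (M * ‖gg s‖) * ‖Bs s‖ := by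
          apply mul_le_mul_of_nonneg_right (u.le_opNorm _) (norm_nonneg _)
      _ ≤ (M * 1) * ‖Bs s‖ := by
          have h1 : ‖gg s‖ ≤ 1 := flat (sgn s) (fun l => (norm_sgn s l).le)
          gcongr
      _ = M * ‖Bs s‖ := by ring
  have hrad0 : ∀ s : Fin n → Bool,
      (∑ k, sgn s k • (fun l => v (w l) (u (G l) x)) k) = Bs s := by
    intro s; rfl
  have havg : ‖∑ l, (u (G l * G l)) (v (w l) x)‖
      ≤ M * radNorm (fun l => v (w l) (u (G l) x)) := by
    rw [hS, norm_smul]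
    have hn2 : ‖((2:ℂ) ^ n)⁻¹‖ = ((2:ℝ) ^ n)⁻¹ := by
      rw [norm_inv, norm_pow]
      norm_num
    rw [hn2]
    calc ((2:ℝ)^n)⁻¹ * ‖∑ s : Fin n → Bool, u (gg s) (Bs s)‖
        ≤ ((2:ℝ)^n)⁻¹ * ∑ s : Fin n → Bool, (M * ‖Bs s‖) := by
          apply mul_le_mul_of_nonneg_left ?_ (by positivity)
          exact le_trans (norm_sum_le _ _) (Finset.sum_le_sum (fun s _ => hsing s))
      _ = M * ((∑ s : Fin n → Bool, ‖Bs s‖) / 2 ^ n) := by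
          rw [← Finset.mul_sum]; ring
      _ ≤ M * radNorm (fun l => v (w l) (u (G l) x)) := by
          apply mul_le_mul_of_nonneg_left ?_ (norm_nonneg u)
          have := avg_le_radNorm (fun l => v (w l) (u (G l) x))
          simpa only [hrad0] using this
  -- bound the radNorm via R-boundedness
  have hradG : radNorm (fun l => u (G l) x) ≤ M * ‖x‖ := by
    apply radNorm_le _ (by positivity)
    intro s
    have : (∑ k, sgn s k • (fun l => u (G l) x) k) = u (gg s) x := by
      rw [hgg]
      simp only [map_sum, map_smul]
      rw [ContinuousLinearMap.sum_apply]
      exact Finset.sum_congr rfl (fun l _ => by rw [ContinuousLinearMap.smul_apply])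
    rw [this]
    calc ‖u (gg s) x‖ ≤ ‖u (gg s)‖ * ‖x‖ := ContinuousLinearMap.le_opNorm _ _
      _ ≤ (M * ‖gg s‖) * ‖x‖ := mul_le_mul_of_nonneg_right (u.le_opNorm _) (norm_nonneg _)
      _ ≤ (M * 1) * ‖x‖ := by
          have h1 : ‖gg s‖ ≤ 1 := flat (sgn s) (fun l => (norm_sgn s l).le)
          gcongr
      _ = M * ‖x‖ := by ring
  have hrad : radNorm (fun l => v (w l) (u (G l) x)) ≤ C * (c * (M * ‖x‖)) := by
    rcases eq_or_lt_of_le hc with hc0 | hcpos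
    · -- c = 0
      have hw0 : ∀ l, w l = 0 := by
        intro l
        have := hw l
        rw [← hc0] at this
        exact norm_le_zero_iff.mp this
      have : (fun l => v (w l) (u (G l) x)) = fun _ => (0 : X) := by
        funext l; rw [hw0 l, map_zero, ContinuousLinearMap.zero_apply]
      rw [this, ← hc0]
      have : radNorm (fun _ : Fin n => (0:X)) ≤ 0 := by
        apply radNorm_le _ le_rfl
        intro s; simp
      simpa using this
    · -- c > 0
      have hcc : ((c:ℂ)) ≠ 0 := by
        simp only [ne_eq, Complex.ofReal_eq_zero]
        exact ne_of_gt hcpos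
      set T : Fin n → (X →L[ℂ] X) := fun l => v ((c:ℂ)⁻¹ • w l) with hT
      have hmem : ∀ l, T l ∈ {T : X →L[ℂ] X | ∃ z : Z, ‖z‖ ≤ 1 ∧ T = v z} := by
        intro l
        refine ⟨(c:ℂ)⁻¹ • w l, ?_, rfl⟩
        rw [norm_smul, norm_inv]
        rw [Complex.norm_real, Real.norm_of_nonneg hc]
        rw [inv_mul_le_iff₀ hcpos, mul_one]
        exact hw l
      have heqfam : (fun l => v (w l) (u (G l) x))
          = fun l => T l ((c:ℂ) • (u (G l) x)) := by
        funext l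
        rw [hT]
        show v (w l) (u (G l) x) = v ((c:ℂ)⁻¹ • w l) ((c:ℂ) • (u (G l) x))
        rw [map_smul v, ContinuousLinearMap.smul_apply, map_smul, smul_smul,
          inv_mul_cancel₀ hcc, one_smul]
      rw [heqfam]
      calc radNorm (fun l => T l ((c:ℂ) • (u (G l) x)))
          ≤ C * radNorm (fun l => (c:ℂ) • (u (G l) x)) := hC.2 n T _ hmem
        _ = C * (c * radNorm (fun l => u (G l) x)) := by rw [radNorm_smul _ hc]
        _ ≤ C * (c * (M * ‖x‖)) := by
            apply mul_le_mul_of_nonneg_left ?_ hC.1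
            exact mul_le_mul_of_nonneg_left hradG hc
  calc ‖∑ l, (u (G l * G l)) (v (w l) x)‖
      ≤ M * radNorm (fun l => v (w l) (u (G l) x)) := havg
    _ ≤ M * (C * (c * (M * ‖x‖))) := by
        apply mul_le_mul_of_nonneg_left hrad (norm_nonneg u)
    _ = ‖u‖ ^ 2 * C * c * ‖x‖ := by rw [hM]; ring



set_option maxHeartbeats 2000000 in
lemma key_estimate
    {K : Type*} [TopologicalSpace K] [CompactSpace K]
    {X : Type*} [NormedAddCommGroup X] [NormedSpace ℂ X]
    {Z : Type*} [NormedAddCommGroup Z] [NormedSpace ℂ Z]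
    (u : C(K, ℂ) →L[ℂ] (X →L[ℂ] X))
    (hu_one : u 1 = 1) (hu_mul : ∀ f g : C(K, ℂ), u (f * g) = u f * u g)
    (v : Z →L[ℂ] (X →L[ℂ] X)) (C : ℝ)
    (hC : IsRBoundedWith C {T : X →L[ℂ] X | ∃ z : Z, ‖z‖ ≤ 1 ∧ T = v z})
    (hcomm : ∀ (f : C(K, ℂ)) (z : Z), u f * v z = v z * u f)
    {p : ℕ} (f : Fin p → C(K, ℂ)) (z : Fin p → Z) :
    ‖∑ i, (u (f i)).comp (v (z i))‖ ≤ ‖u‖^2 * C * ‖∑ i, tensorCM (f i) (z i)‖ := by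
  classical
  set F : C(K, Z) := ∑ i, tensorCM (f i) (z i) with hFdef
  have hC0 := hC.1
  have hM0 : (0:ℝ) ≤ ‖u‖ := norm_nonneg u
  have hbound0 : 0 ≤ ‖u‖^2*C*‖F‖ :=
    mul_nonneg (mul_nonneg (pow_nonneg hM0 2) hC0) (norm_nonneg F)
  apply ContinuousLinearMap.opNorm_le_bound _ hbound0
  intro x
  apply NormedSpace.norm_le_dual_bound ℂ _ (mul_nonneg hbound0 (norm_nonneg x))
  intro φ
  apply le_of_forall_pos_le_add
  intro ε₀ hε₀
  set M : ℝ := ‖u‖ with hMdef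
  set Tx : X := ∑ i, u (f i) (v (z i) x) with hTxdef
  have hTxeq : (∑ i, (u (f i)).comp (v (z i))) x = Tx := by
    rw [ContinuousLinearMap.sum_apply, hTxdef]
    exact Finset.sum_congr rfl (fun i _ => rfl)
  rw [hTxeq]
  set AA : ℝ := ∑ i, ‖v (z i) x‖ with hAAdef
  have hAA0 : 0 ≤ AA := Finset.sum_nonneg (fun i _ => norm_nonneg _)
  set R : ℝ := 1 + ∑ i, ‖f i‖ with hRdef
  have hR0 : 0 < R := by
    rw [hRdef]
    have : (0:ℝ) ≤ ∑ i, ‖f i‖ := Finset.sum_nonneg (fun i _ => norm_nonneg _)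
    linarith
  set a : ℝ := ε₀ / (2 * (2*M*AA*‖φ‖ + 1)) with hadef
  have hWpos : (0:ℝ) < 2*M*AA*‖φ‖ + 1 := by positivity
  have ha : 0 < a := by
    rw [hadef]; exact div_pos hε₀ (by linarith)
  set Nn : ℕ := ⌈(4*p*M*‖Tx‖*‖φ‖)/ε₀⌉₊ + 1 with hNdef
  have hN : 0 < Nn := Nat.succ_pos _
  have hNR : (0:ℝ) < (Nn:ℝ) := by exact_mod_cast hN
  set κ : ℝ := a/(8*Nn) with hκdef
  have hκ : 0 < κ := by rw [hκdef]; positivity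
  set B : ℤ := ⌈R/a⌉ + 2 with hBdef
  -- coordinate functions
  set co : (Fin p × Bool) → C(K, ℝ) := fun d =>
    cond d.2 ⟨fun t => (f d.1 t).im, (Complex.continuous_im.comp (map_continuous (f d.1)))⟩
             ⟨fun t => (f d.1 t).re, (Complex.continuous_re.comp (map_continuous (f d.1)))⟩
    with hcodef
  have hco_re : ∀ (i : Fin p) (t : K), co (i, false) t = (f i t).re := fun i t => rfl
  have hco_im : ∀ (i : Fin p) (t : K), co (i, true) t = (f i t).im := fun i t => rfl
  have hfabs : ∀ (i : Fin p) (t : K), ‖f i t‖ ≤ ∑ j, ‖f j‖ := by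
    intro i t
    calc ‖f i t‖ ≤ ‖f i‖ := ContinuousMap.norm_coe_le_norm _ t
      _ ≤ ∑ j, ‖f j‖ := Finset.single_le_sum (fun j _ => norm_nonneg _) (Finset.mem_univ i)
  have hco_bound : ∀ d (t : K), |co d t| ≤ R := by
    rintro ⟨i, b⟩ t
    have h1 : ‖f i t‖ ≤ R := by
      rw [hRdef]; have := hfabs i t; linarith
    cases b
    · rw [hco_re]
      calc |(f i t).re| ≤ ‖f i t‖ := Complex.abs_re_le_norm _
        _ = ‖f i t‖ := rfl
        _ ≤ R := h1
    · rw [hco_im]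
      calc |(f i t).im| ≤ ‖f i t‖ := Complex.abs_im_le_norm _
        _ = ‖f i t‖ := rfl
        _ ≤ R := h1
  -- offsets
  set oo : Fin Nn → ℝ := fun r => (r:ℝ)*a/Nn with hoodef
  have hoo : ∀ r : Fin Nn, 0 ≤ oo r ∧ oo r ≤ a := by
    intro r
    constructor
    · rw [hoodef]; positivity
    · rw [hoodef]
      rw [div_le_iff₀ hNR]
      have hr : ((r:ℕ):ℝ) ≤ (Nn:ℝ) := by exact_mod_cast (r.2).le
      nlinarith
  -- the systems
  set GG : Fin Nn → ((Fin p × Bool) → ℤ) → C(K, ℂ) := fun r m => Gcm co a κ (oo r) m with hGGdef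
  set cc : Fin Nn → Fin p → ((Fin p × Bool) → ℤ) → ℂ :=
    fun r i m => if h : ∃ t, GG r m t ≠ 0 then f i h.choose else 0 with hccdef
  set wv : Fin Nn → ((Fin p × Bool) → ℤ) → Z := fun r m => ∑ i, cc r i m • z i with hwvdef
  set hh : Fin Nn → Fin p → C(K, ℂ) :=
    fun r i => ∑ m ∈ cellSet (Fin p × Bool) B, (GG r m * GG r m) * (f i - cc r i m • 1) with hhhdef
  set σσ : Fin Nn → C(K, ℂ) := fun r => sigmaCM co a κ (oo r) B with hσσdef
  have hσσ_sum : ∀ r, σσ r = ∑ m ∈ cellSet (Fin p × Bool) B, GG r m * GG r m := by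
    intro r; rfl
  have hFapp : ∀ t : K, F t = ∑ i, f i t • z i := by
    intro t
    rw [hFdef, ContinuousMap.sum_apply]
    rfl
  have hwv_norm : ∀ r m, ‖wv r m‖ ≤ ‖F‖ := by
    intro r m
    by_cases h : ∃ t, GG r m t ≠ 0
    · have : wv r m = F h.choose := by
        rw [hwvdef, hFapp]
        simp only
        exact Finset.sum_congr rfl (fun i _ => by rw [hccdef]; simp only [dif_pos h])
      rw [this]
      exact ContinuousMap.norm_coe_le_norm F _
    · have : wv r m = 0 := by
        rw [hwvdef]
        simp only
        rw [Finset.sum_eq_zero]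
        intro i _
        rw [hccdef]
        simp only [dif_neg h, zero_smul]
      rw [this, norm_zero]
      exact norm_nonneg F
  -- main term estimate via core_system
  have hMain : ∀ r, ‖∑ m ∈ cellSet (Fin p × Bool) B, (u (GG r m * GG r m)) (v (wv r m) x)‖
      ≤ M^2*C*‖F‖*‖x‖ := by
    intro r
    set cs := cellSet (Fin p × Bool) B with hcs
    set e : Fin cs.card ≃ {m // m ∈ cs} := cs.equivFin.symm with hedef
    have hconv : ∑ m ∈ cs, (u (GG r m * GG r m)) (v (wv r m) x)
        = ∑ l : Fin cs.card, (u (GG r (e l) * GG r (e l))) (v (wv r (e l)) x) := by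
      rw [← Finset.sum_coe_sort cs (fun m => (u (GG r m * GG r m)) (v (wv r m) x))]
      exact (Equiv.sum_comp e (fun m : {m // m ∈ cs} =>
        (u (GG r m * GG r m)) (v (wv r m) x))).symm
    rw [hconv]
    have hdisj : ∀ l l' : Fin cs.card, l ≠ l' → GG r (e l) * GG r (e l') = 0 := by
      intro l l' hll'
      apply Gcm_mul_eq_zero ha hκ
      intro hcon
      exact hll' (e.injective (Subtype.coe_injective hcon))
    have hG1 : ∀ l : Fin cs.card, ‖GG r (e l)‖ ≤ 1 := fun l => Gcm_norm_le_one co a κ (oo r) _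
    have hwv' : ∀ l : Fin cs.card, ‖wv r (e l)‖ ≤ ‖F‖ := fun l => hwv_norm r (e l)
    exact core_system u hu_mul v C hC hcomm (fun l => GG r (e l)) (fun l => wv r (e l))
      ‖F‖ (norm_nonneg F) hdisj hG1 hwv' x
  -- splitting
  have hsplit : ∀ r, φ Tx = φ ((u (1 - σσ r)) Tx) + φ ((u (σσ r)) Tx) := by
    intro r
    have h1 : (u (1 - σσ r)) Tx + (u (σσ r)) Tx = Tx := by
      have : u (1 - σσ r) + u (σσ r) = u 1 := by
        rw [← map_add]
        congr 1
        ring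
      have h2 := congrArg (fun (A : X →L[ℂ] X) => A Tx) this
      simp only [ContinuousLinearMap.add_apply] at h2
      rw [h2, hu_one, ContinuousLinearMap.one_apply]
    have h2 : φ Tx = φ ((u (1 - σσ r)) Tx + (u (σσ r)) Tx) := congrArg φ h1.symm
    rw [map_add] at h2
    exact h2
  -- decomposition of the main part
  have hring : ∀ r i m, (GG r m * GG r m) * (f i - cc r i m • 1)
      = (GG r m * GG r m) * f i - cc r i m • (GG r m * GG r m) := by
    intro r i m
    rw [mul_sub, mul_smul_comm, mul_one]
  have hstepA : ∀ r i, (u (hh r i)) (v (z i) x)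
      = ∑ m ∈ cellSet (Fin p × Bool) B,
          ((u ((GG r m * GG r m) * f i)) (v (z i) x)
            - cc r i m • (u (GG r m * GG r m)) (v (z i) x)) := by
    intro r i
    rw [hhhdef]
    simp only
    rw [map_sum, ContinuousLinearMap.sum_apply]
    apply Finset.sum_congr rfl
    intro m _
    rw [hring r i m, map_sub, map_smul, ContinuousLinearMap.sub_apply,
      ContinuousLinearMap.smul_apply]
  have hstepB : ∀ r m, (u (GG r m * GG r m)) (v (wv r m) x)
      = ∑ i, cc r i m • (u (GG r m * GG r m)) (v (z i) x) := by
    intro r m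
    have h1 : v (wv r m) x = ∑ i, cc r i m • (v (z i) x) := by
      rw [hwvdef]
      simp only
      rw [map_sum, ContinuousLinearMap.sum_apply]
      apply Finset.sum_congr rfl
      intro i _
      rw [map_smul, ContinuousLinearMap.smul_apply]
    rw [h1, map_sum]
    apply Finset.sum_congr rfl
    intro i _
    rw [map_smul]
  have hstepC : ∀ r, (u (σσ r)) Tx
      = ∑ m ∈ cellSet (Fin p × Bool) B, ∑ i,
          (u ((GG r m * GG r m) * f i)) (v (z i) x) := by
    intro r
    rw [hσσ_sum r]
    rw [show (u (∑ m ∈ cellSet (Fin p × Bool) B, GG r m * GG r m))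
        = ∑ m ∈ cellSet (Fin p × Bool) B, u (GG r m * GG r m) from map_sum u _ _]
    rw [ContinuousLinearMap.sum_apply]
    apply Finset.sum_congr rfl
    intro m _
    rw [hTxdef, map_sum]
    apply Finset.sum_congr rfl
    intro i _
    rw [hu_mul (GG r m * GG r m) (f i), hu_mul (GG r m) (GG r m)]
    simp only [ContinuousLinearMap.mul_apply]
  have hmainEq : ∀ r, (u (σσ r)) Tx
      = (∑ i, (u (hh r i)) (v (z i) x))
        + ∑ m ∈ cellSet (Fin p × Bool) B, (u (GG r m * GG r m)) (v (wv r m) x) := by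
    intro r
    rw [hstepC r]
    rw [Finset.sum_congr rfl (fun i (_ : i ∈ Finset.univ) => hstepA r i)]
    rw [Finset.sum_congr rfl (fun m (_ : m ∈ cellSet (Fin p × Bool) B) => hstepB r m)]
    rw [Finset.sum_comm]
    have hY : ∑ m ∈ cellSet (Fin p × Bool) B, ∑ i, cc r i m • (u (GG r m * GG r m)) ((v (z i)) x)
        = ∑ i, ∑ m ∈ cellSet (Fin p × Bool) B, cc r i m • (u (GG r m * GG r m)) ((v (z i)) x) :=
      Finset.sum_comm
    rw [hY, ← Finset.sum_add_distrib]
    apply Finset.sum_congr rfl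
    intro i _
    rw [← Finset.sum_add_distrib]
    apply Finset.sum_congr rfl
    intro m _
    abel
  -- pointwise bound for GG
  have hGGabs : ∀ r m (t : K), ‖GG r m t‖ ≤ 1 := by
    intro r m t
    calc ‖GG r m t‖ ≤ ‖GG r m‖ := ContinuousMap.norm_coe_le_norm _ t
      _ ≤ 1 := Gcm_norm_le_one co a κ (oo r) m
  -- oscillation error bound
  have hErr : ∀ r i, ‖hh r i‖ ≤ 2*a := by
    intro r i
    rw [hhhdef]
    simp only
    rw [ContinuousMap.norm_le _ (by linarith)]
    intro t
    rw [ContinuousMap.sum_apply]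
    have hterm : ∀ m, ((GG r m * GG r m * (f i - cc r i m • (1:C(K,ℂ)))) t)
        = (GG r m t * GG r m t) * (f i t - cc r i m) := by
      intro m
      simp only [ContinuousMap.mul_apply, ContinuousMap.sub_apply, ContinuousMap.smul_apply,
        ContinuousMap.one_apply, smul_eq_mul, mul_one]
    rw [Finset.sum_congr rfl (fun m _ => hterm m)]
    by_cases hall : ∀ m ∈ cellSet (Fin p × Bool) B, GG r m t = 0
    · rw [Finset.sum_eq_zero (fun m hm => by rw [hall m hm]; ring)]
      rw [norm_zero]
      linarith
    · push_neg at hall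
      obtain ⟨m₀, hm₀mem, hm₀⟩ := hall
      have hsingle : ∀ m ∈ cellSet (Fin p × Bool) B, m ≠ m₀ →
          (GG r m t * GG r m t) * (f i t - cc r i m) = 0 := by
        intro m _ hm
        have hz : GG r m t = 0 := by
          by_contra hcon
          exact hm ((Gcm_single ha hκ hcon).trans (Gcm_single ha hκ hm₀).symm)
        rw [hz]; ring
      rw [Finset.sum_eq_single_of_mem m₀ hm₀mem hsingle]
      have hex : ∃ t', GG r m₀ t' ≠ 0 := ⟨t, hm₀⟩
      have hccval : cc r i m₀ = f i hex.choose := by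
        rw [hccdef]
        simp only [dif_pos hex]
      have ht' : GG r m₀ hex.choose ≠ 0 := hex.choose_spec
      have hre' : |(f i t - f i hex.choose).re| ≤ a := by
        rw [Complex.sub_re, ← hco_re i t, ← hco_re i hex.choose]
        exact (Gcm_osc hκ hm₀ ht' (i, false)).le
      have him' : |(f i t - f i hex.choose).im| ≤ a := by
        rw [Complex.sub_im, ← hco_im i t, ← hco_im i hex.choose]
        exact (Gcm_osc hκ hm₀ ht' (i, true)).le
      have hosc : ‖f i t - f i hex.choose‖ ≤ 2*a := by
        calc ‖f i t - f i hex.choose‖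
            ≤ |(f i t - f i hex.choose).re| + |(f i t - f i hex.choose).im| :=
              Complex.norm_le_abs_re_add_abs_im _
          _ ≤ 2*a := by linarith
      calc ‖(GG r m₀ t * GG r m₀ t) * (f i t - cc r i m₀)‖
          = ‖GG r m₀ t‖ * ‖GG r m₀ t‖ * ‖f i t - cc r i m₀‖ := by
            rw [norm_mul, norm_mul]
        _ ≤ 1 * 1 * (2*a) := by
            have h1 := hGGabs r m₀ t
            have h2 : ‖f i t - cc r i m₀‖ ≤ 2*a := by rw [hccval]; exact hosc
            have h3 := norm_nonneg (GG r m₀ t)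
            have h4 := norm_nonneg (f i t - cc r i m₀)
            exact mul_le_mul (mul_le_mul h1 h1 h3 zero_le_one) h2 h4 (by norm_num)
        _ = 2*a := by ring
  -- grout functions
  set ρ : Fin Nn → K → ℝ := fun r t => 1 - ∏ d, q1 a κ (oo r) B (co d t) with hρdef
  have hρeq : ∀ r (t : K), ((1:C(K,ℂ)) - σσ r) t = ((ρ r t : ℝ) : ℂ) := by
    intro r t
    rw [ContinuousMap.sub_apply, ContinuousMap.one_apply, hσσdef]
    simp only
    rw [sigmaCM_apply co a κ (oo r) B t, hρdef]
    push_cast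
    ring
  have hq01 : ∀ r d (t : K), 0 ≤ q1 a κ (oo r) B (co d t) ∧ q1 a κ (oo r) B (co d t) ≤ 1 :=
    fun r d t => ⟨q1_nonneg _ _ _ _ _, q1_le_one ha hκ _ _⟩
  have hρ01 : ∀ r (t : K), 0 ≤ ρ r t ∧ ρ r t ≤ 1 := by
    intro r t
    have hp1 : 0 ≤ ∏ d, q1 a κ (oo r) B (co d t) :=
      Finset.prod_nonneg (fun d _ => (hq01 r d t).1)
    have hp2 : (∏ d, q1 a κ (oo r) B (co d t)) ≤ 1 :=
      Finset.prod_le_one (fun d _ => (hq01 r d t).1) (fun d _ => (hq01 r d t).2)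
    rw [hρdef]
    constructor
    · simp only; linarith
    · simp only; linarith
  have hexcl : ∀ (d : Fin p × Bool) (t : K) (r r' : Fin Nn), r ≠ r' →
      (1 - q1 a κ (oo r) B (co d t)) = 0 ∨ (1 - q1 a κ (oo r') B (co d t)) = 0 := by
    intro d t r r' hne
    by_contra hcon
    push_neg at hcon
    obtain ⟨h1, h2⟩ := hcon
    have hq1 : q1 a κ (oo r) B (co d t) ≠ 1 := fun hc => h1 (by rw [hc]; ring)
    have hq2 : q1 a κ (oo r') B (co d t) ≠ 1 := fun hc => h2 (by rw [hc]; ring)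
    have hmem1 : ⌊(co d t - oo r)/a⌋ ∈ Finset.Icc (-B) B := by
      rw [hBdef]
      exact floor_mem_Icc ha (hoo r).1 (hoo r).2 hR0.le (hco_bound d t)
    have hmem2 : ⌊(co d t - oo r')/a⌋ ∈ Finset.Icc (-B) B := by
      rw [hBdef]
      exact floor_mem_Icc ha (hoo r').1 (hoo r').2 hR0.le (hco_bound d t)
    obtain ⟨n1, hn1⟩ := q1_ne_one_near ha hκ hmem1 hq1
    obtain ⟨n2, hn2⟩ := q1_ne_one_near ha hκ hmem2 hq2
    rw [hoodef] at hn1 hn2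
    rw [hκdef] at hn1 hn2
    exact lattice_sep hN r.2 r'.2 (fun hc => hne (Fin.ext hc)) ha hn1 hn2
  have hρsum : ∀ t : K, ∑ r, ρ r t ≤ 2*p := by
    intro t
    calc ∑ r, ρ r t ≤ ∑ r, ∑ d, (1 - q1 a κ (oo r) B (co d t)) := by
          apply Finset.sum_le_sum
          intro r _
          rw [hρdef]
          simp only
          exact one_sub_prod_le_sum Finset.univ _ (fun d _ => (hq01 r d t).1)
            (fun d _ => (hq01 r d t).2)
      _ = ∑ d, ∑ r, (1 - q1 a κ (oo r) B (co d t)) := Finset.sum_comm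
      _ ≤ ∑ _d : (Fin p × Bool), (1:ℝ) := by
          apply Finset.sum_le_sum
          intro d _
          apply sum_le_one_of_pairwise_zero
          · intro r; linarith [(hq01 r d t).2]
          · intro r; linarith [(hq01 r d t).1]
          · intro r r' hne; exact hexcl d t r r' hne
      _ = 2*p := by
          rw [Finset.sum_const, Finset.card_univ]
          rw [Fintype.card_prod, Fintype.card_fin, Fintype.card_bool]
          rw [nsmul_eq_mul]
          push_cast
          ring
  -- pigeonhole over the shifted systems
  set Λ : Fin Nn → ℂ := fun r => φ ((u (1 - σσ r)) Tx) with hΛdef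
  have hsplit2 : ∀ r, φ Tx = Λ r + φ ((u (σσ r)) Tx) := by
    intro r
    simp only [hΛdef]
    exact hsplit r
  set θ : Fin Nn → ℂ := fun r => if Λ r = 0 then 1 else ((‖Λ r‖ : ℝ) : ℂ) / (Λ r) with hθdef
  have hθ1 : ∀ r, ‖θ r‖ ≤ 1 := by
    intro r
    rw [hθdef]
    simp only
    split
    · simp
    · rename_i hzero
      rw [norm_div, Complex.norm_real, Real.norm_of_nonneg (norm_nonneg _)]
      rw [div_le_one (norm_pos_iff.mpr hzero)]
  have hθΛ : ∀ r, θ r * Λ r = ((‖Λ r‖ : ℝ) : ℂ) := by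
    intro r
    rw [hθdef]
    simp only
    split
    · rename_i h; rw [h]; simp
    · rename_i h
      field_simp
  set gθ : C(K, ℂ) := ∑ r, θ r • ((1:C(K,ℂ)) - σσ r) with hgθdef
  have hgθnorm : ‖gθ‖ ≤ 2*p := by
    rw [ContinuousMap.norm_le _ (by positivity)]
    intro t
    rw [hgθdef, ContinuousMap.sum_apply]
    calc ‖∑ r, (θ r • ((1:C(K,ℂ)) - σσ r)) t‖
        ≤ ∑ r, ‖(θ r • ((1:C(K,ℂ)) - σσ r)) t‖ := norm_sum_le _ _
      _ ≤ ∑ r, ρ r t := by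
          apply Finset.sum_le_sum
          intro r _
          rw [ContinuousMap.smul_apply, norm_smul, hρeq r t]
          calc ‖θ r‖ * ‖((ρ r t : ℝ):ℂ)‖ ≤ 1 * ‖((ρ r t:ℝ):ℂ)‖ :=
                mul_le_mul_of_nonneg_right (hθ1 r) (norm_nonneg _)
            _ = ρ r t := by
                rw [one_mul, Complex.norm_real, Real.norm_of_nonneg (hρ01 r t).1]
      _ ≤ 2*p := hρsum t
  have hcollect : ∑ r, θ r * Λ r = φ ((u gθ) Tx) := by
    have h1 : u gθ = ∑ r, θ r • u ((1:C(K,ℂ)) - σσ r) := by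
      rw [hgθdef, map_sum]
      exact Finset.sum_congr rfl (fun r _ => by rw [map_smul])
    rw [h1, ContinuousLinearMap.sum_apply, map_sum]
    apply Finset.sum_congr rfl
    intro r _
    rw [ContinuousLinearMap.smul_apply, map_smul, hΛdef]
    simp only [smul_eq_mul]
  have hsumΛ : ∑ r, ‖Λ r‖ ≤ ‖φ‖ * (M * ((2*p) * ‖Tx‖)) := by
    have h1 : ((∑ r, ‖Λ r‖ : ℝ) : ℂ) = φ ((u gθ) Tx) := by
      rw [← hcollect]
      push_cast
      exact Finset.sum_congr rfl (fun r _ => (hθΛ r).symm)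
    have h2 : ∑ r, ‖Λ r‖ = ‖φ ((u gθ) Tx)‖ := by
      rw [← h1, Complex.norm_real,
        Real.norm_of_nonneg (Finset.sum_nonneg (fun r _ => norm_nonneg _))]
    rw [h2]
    calc ‖φ ((u gθ) Tx)‖ ≤ ‖φ‖ * ‖(u gθ) Tx‖ := ContinuousLinearMap.le_opNorm _ _
      _ ≤ ‖φ‖ * (‖u gθ‖ * ‖Tx‖) :=
          mul_le_mul_of_nonneg_left (ContinuousLinearMap.le_opNorm _ _) (norm_nonneg φ)
      _ ≤ ‖φ‖ * ((M * ‖gθ‖) * ‖Tx‖) := by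
          apply mul_le_mul_of_nonneg_left ?_ (norm_nonneg φ)
          exact mul_le_mul_of_nonneg_right (u.le_opNorm gθ) (norm_nonneg Tx)
      _ ≤ ‖φ‖ * (M * ((2*p) * ‖Tx‖)) := by
          apply mul_le_mul_of_nonneg_left ?_ (norm_nonneg φ)
          rw [mul_assoc]
          apply mul_le_mul_of_nonneg_left ?_ hM0
          exact mul_le_mul_of_nonneg_right hgθnorm (norm_nonneg Tx)
  have hpig : ∃ r₀, ‖Λ r₀‖ ≤ (‖φ‖ * (M * ((2*p) * ‖Tx‖)))/Nn := by
    have hne : (Finset.univ : Finset (Fin Nn)).Nonempty := ⟨⟨0, hN⟩, Finset.mem_univ _⟩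
    have hsum2 : ∑ r, ‖Λ r‖ ≤ ∑ _r : Fin Nn, (‖φ‖ * (M * ((2*p) * ‖Tx‖)))/Nn := by
      rw [Finset.sum_const, Finset.card_univ, Fintype.card_fin, nsmul_eq_mul]
      rw [mul_div_cancel₀ _ (ne_of_gt hNR)]
      exact hsumΛ
    obtain ⟨r₀, _, h⟩ := Finset.exists_le_of_sum_le hne hsum2
    exact ⟨r₀, h⟩
  obtain ⟨r₀, hr₀⟩ := hpig
  -- error bound for the chosen system
  have hErrBound : ‖∑ i, (u (hh r₀ i)) (v (z i) x)‖ ≤ 2*a*M*AA := by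
    calc ‖∑ i, (u (hh r₀ i)) (v (z i) x)‖
        ≤ ∑ i, ‖(u (hh r₀ i)) (v (z i) x)‖ := norm_sum_le _ _
      _ ≤ ∑ i, (2*a*M) * ‖v (z i) x‖ := by
          apply Finset.sum_le_sum
          intro i _
          calc ‖(u (hh r₀ i)) (v (z i) x)‖
              ≤ ‖u (hh r₀ i)‖ * ‖v (z i) x‖ := ContinuousLinearMap.le_opNorm _ _
            _ ≤ (M * ‖hh r₀ i‖) * ‖v (z i) x‖ :=
                mul_le_mul_of_nonneg_right (u.le_opNorm _) (norm_nonneg _)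
            _ ≤ (M * (2*a)) * ‖v (z i) x‖ := by
                apply mul_le_mul_of_nonneg_right ?_ (norm_nonneg _)
                exact mul_le_mul_of_nonneg_left (hErr r₀ i) hM0
            _ = (2*a*M) * ‖v (z i) x‖ := by ring
      _ = 2*a*M*AA := by rw [← Finset.mul_sum]
  -- numeric estimates
  have hW0 : (0:ℝ) ≤ 2*M*AA*‖φ‖ := by positivity
  have hnum1 : ‖φ‖ * (2*a*M*AA) ≤ ε₀/2 := by
    have heq : ‖φ‖ * (2*a*M*AA) = a * (2*M*AA*‖φ‖) := by ring
    rw [heq, hadef]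
    rw [div_mul_eq_mul_div, div_le_div_iff₀ (by linarith) (by norm_num)]
    nlinarith
  have hnum2 : (‖φ‖ * (M * ((2*p) * ‖Tx‖)))/Nn ≤ ε₀/2 := by
    have hceil : (4*p*M*‖Tx‖*‖φ‖)/ε₀ ≤ (Nn:ℝ) := by
      rw [hNdef]
      push_cast
      have := Nat.le_ceil ((4*p*M*‖Tx‖*‖φ‖)/ε₀)
      linarith
    rw [div_le_div_iff₀ hNR (by norm_num)]
    have h2 : ε₀ * ((4*(p:ℝ)*M*‖Tx‖*‖φ‖)/ε₀) ≤ ε₀ * Nn :=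
      mul_le_mul_of_nonneg_left hceil hε₀.le
    rw [mul_div_cancel₀ _ (ne_of_gt hε₀)] at h2
    nlinarith
  -- final chain
  have hσbound : ‖φ ((u (σσ r₀)) Tx)‖ ≤ ‖φ‖ * (2*a*M*AA) + ‖φ‖ * (M^2*C*‖F‖*‖x‖) := by
    rw [hmainEq r₀, map_add]
    calc ‖φ (∑ i, (u (hh r₀ i)) (v (z i) x))
          + φ (∑ m ∈ cellSet (Fin p × Bool) B, (u (GG r₀ m * GG r₀ m)) (v (wv r₀ m) x))‖
        ≤ ‖φ (∑ i, (u (hh r₀ i)) (v (z i) x))‖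
          + ‖φ (∑ m ∈ cellSet (Fin p × Bool) B, (u (GG r₀ m * GG r₀ m)) (v (wv r₀ m) x))‖ :=
          norm_add_le _ _
      _ ≤ ‖φ‖ * (2*a*M*AA) + ‖φ‖ * (M^2*C*‖F‖*‖x‖) := by
          apply add_le_add
          · calc ‖φ (∑ i, (u (hh r₀ i)) (v (z i) x))‖
                ≤ ‖φ‖ * ‖∑ i, (u (hh r₀ i)) (v (z i) x)‖ := ContinuousLinearMap.le_opNorm _ _
              _ ≤ ‖φ‖ * (2*a*M*AA) :=
                  mul_le_mul_of_nonneg_left hErrBound (norm_nonneg φ)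
          · calc ‖φ (∑ m ∈ cellSet (Fin p × Bool) B, (u (GG r₀ m * GG r₀ m)) (v (wv r₀ m) x))‖
                ≤ ‖φ‖ * ‖∑ m ∈ cellSet (Fin p × Bool) B, (u (GG r₀ m * GG r₀ m)) (v (wv r₀ m) x)‖ :=
                  ContinuousLinearMap.le_opNorm _ _
              _ ≤ ‖φ‖ * (M^2*C*‖F‖*‖x‖) :=
                  mul_le_mul_of_nonneg_left (hMain r₀) (norm_nonneg φ)
  calc ‖φ Tx‖ = ‖Λ r₀ + φ ((u (σσ r₀)) Tx)‖ := by rw [← hsplit2 r₀]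
    _ ≤ ‖Λ r₀‖ + ‖φ ((u (σσ r₀)) Tx)‖ := norm_add_le _ _
    _ ≤ (‖φ‖ * (M * ((2*p) * ‖Tx‖)))/Nn
        + (‖φ‖ * (2*a*M*AA) + ‖φ‖ * (M^2*C*‖F‖*‖x‖)) := add_le_add hr₀ hσbound
    _ ≤ M^2*C*‖F‖*‖x‖*‖φ‖ + ε₀ := by
        have h3 : ‖φ‖ * (M^2*C*‖F‖*‖x‖) = M^2*C*‖F‖*‖x‖*‖φ‖ := by ring
        rw [h3]
        linarith


section Construction

variable {K : Type*} [TopologicalSpace K] [CompactSpace K]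
variable {X : Type*} [NormedAddCommGroup X] [NormedSpace ℂ X] [CompleteSpace X]
variable {Z : Type*} [NormedAddCommGroup Z] [NormedSpace ℂ Z]

/-- the set of elementary tensors -/
def tensorSet (K : Type*) [TopologicalSpace K] (Z : Type*) [NormedAddCommGroup Z]
    [NormedSpace ℂ Z] : Set C(K, Z) :=
  {g | ∃ (f : C(K, ℂ)) (z : Z), g = tensorCM f z}

lemma list_sum_fin {M α : Type*} [AddCommMonoid M] (g : α → M) :
    ∀ l : List α, (l.map g).sum = ∑ i : Fin l.length, g (l.get i) := by
  intro l
  induction l with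
  | nil => simp
  | cons A L ih =>
    rw [List.map_cons, List.sum_cons, ih]
    exact (Fin.sum_univ_succ (f := fun i : Fin (L.length + 1) => g ((A :: L).get i))).symm

-- density of the span of tensors
lemma dense_tensor_span :
    Dense ((Submodule.span ℂ (tensorSet K Z) : Submodule ℂ C(K, Z)) : Set C(K, Z)) := by
  rw [Metric.dense_iff]
  intro F ε hε
  -- cover the compact range of F by ε/4-balls
  have hcpt : IsCompact (Set.range F) := isCompact_range (map_continuous F)
  obtain ⟨t0, hfin, hcov⟩ := (Metric.totallyBounded_iff).mp hcpt.totallyBounded (ε/4)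
    (by positivity)
  classical
  set s' : Finset Z := hfin.toFinset with hs'
  have hcov' : ∀ t : K, ∃ j ∈ s', ‖F t - j‖ < ε/4 := by
    intro t
    have : F t ∈ ⋃ y ∈ t0, Metric.ball y (ε/4) := hcov (Set.mem_range_self t)
    rw [Set.mem_iUnion₂] at this
    obtain ⟨j, hj, hball⟩ := this
    refine ⟨j, by rwa [hs', Set.Finite.mem_toFinset], ?_⟩
    rw [Metric.mem_ball, dist_eq_norm] at hball
    exact hball
  set dj : Z → K → ℝ := fun j t => max 0 (ε/4 - ‖F t - j‖) with hdj
  have hdjcont : ∀ j, Continuous (dj j) := by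
    intro j
    apply continuous_const.max
    apply continuous_const.sub
    exact ((map_continuous F).sub continuous_const).norm
  have hdj0 : ∀ j t, 0 ≤ dj j t := fun j t => le_max_left _ _
  set σf : K → ℝ := fun t => ∑ j ∈ s', dj j t with hσf
  have hσcont : Continuous σf := by
    apply continuous_finset_sum
    intro j _
    exact hdjcont j
  have hσpos : ∀ t, 0 < σf t := by
    intro t
    obtain ⟨j₀, hj₀s, hj₀⟩ := hcov' t
    apply Finset.sum_pos' (fun j _ => hdj0 j t)
    refine ⟨j₀, hj₀s, ?_⟩
    rw [hdj]
    simp only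
    rw [lt_max_iff]
    right; linarith
  set gj : Z → C(K, ℂ) := fun j =>
    ⟨fun t => ((dj j t / σf t : ℝ) : ℂ),
      Complex.continuous_ofReal.comp ((hdjcont j).div hσcont (fun t => (hσpos t).ne'))⟩
    with hgj
  set G : C(K, Z) := ∑ j ∈ s', tensorCM (gj j) j with hG
  have hGmem : G ∈ Submodule.span ℂ (tensorSet K Z) := by
    apply Submodule.sum_mem
    intro j _
    exact Submodule.subset_span ⟨gj j, j, rfl⟩
  refine ⟨G, Metric.mem_ball.mpr ?_, hGmem⟩
  have hsum1 : ∀ t, ∑ j ∈ s', dj j t / σf t = 1 := by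
    intro t
    rw [← Finset.sum_div]
    exact div_self (hσpos t).ne'
  have hpoint : ∀ t : K, ‖F t - G t‖ ≤ ε/4 := by
    intro t
    have hGt : G t = ∑ j ∈ s', ((dj j t / σf t : ℝ) : ℂ) • j := by
      rw [hG, ContinuousMap.sum_apply]
      rfl
    have hFt : F t = ∑ j ∈ s', ((dj j t / σf t : ℝ) : ℂ) • F t := by
      rw [← Finset.sum_smul]
      have : (∑ j ∈ s', ((dj j t / σf t : ℝ) : ℂ)) = ((1:ℝ):ℂ) := by
        rw [← Complex.ofReal_sum, hsum1 t]
      rw [this]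
      norm_num
    have hdiff : F t - G t = ∑ j ∈ s', ((dj j t / σf t : ℝ) : ℂ) • (F t - j) := by
      rw [Finset.sum_congr rfl (fun j _ => smul_sub (((dj j t / σf t : ℝ) : ℂ)) (F t) j)]
      rw [Finset.sum_sub_distrib, ← hGt, ← hFt]
    rw [hdiff]
    calc ‖∑ j ∈ s', ((dj j t / σf t : ℝ) : ℂ) • (F t - j)‖
        ≤ ∑ j ∈ s', ‖((dj j t / σf t : ℝ) : ℂ) • (F t - j)‖ := norm_sum_le _ _
      _ ≤ ∑ j ∈ s', (dj j t / σf t) * (ε/4) := by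
          apply Finset.sum_le_sum
          intro j _
          rw [norm_smul, Complex.norm_real,
            Real.norm_of_nonneg (div_nonneg (hdj0 j t) (hσpos t).le)]
          by_cases hz : dj j t = 0
          · rw [hz]
            simp
          · have hle : ‖F t - j‖ ≤ ε/4 := by
              by_contra hcon
              push_neg at hcon
              apply hz
              have hng : ε/4 - ‖F t - j‖ ≤ 0 := by linarith
              simp only [hdj]
              rw [max_eq_left hng]
            exact mul_le_mul_of_nonneg_left hle (div_nonneg (hdj0 j t) (hσpos t).le)
      _ = ε/4 := by
          rw [← Finset.sum_mul, hsum1 t, one_mul]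
  have hnorm : ‖F - G‖ ≤ ε/4 := by
    rw [ContinuousMap.norm_le _ (by positivity)]
    intro t
    rw [ContinuousMap.sub_apply]
    exact hpoint t
  rw [dist_eq_norm]
  calc ‖G - F‖ = ‖F - G‖ := norm_sub_rev _ _
    _ ≤ ε/4 := hnorm
    _ < ε := by linarith

end Construction

section Final

variable {K : Type*} [TopologicalSpace K] [CompactSpace K]
variable {X : Type*} [NormedAddCommGroup X] [NormedSpace ℂ X] [CompleteSpace X]
variable {Z : Type*} [NormedAddCommGroup Z] [NormedSpace ℂ Z]

set_option maxHeartbeats 1000000 in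
theorem final_thm
    (u : C(K, ℂ) →L[ℂ] (X →L[ℂ] X))
    (hu_one : u 1 = 1) (hu_mul : ∀ f g : C(K, ℂ), u (f * g) = u f * u g)
    (v : Z →L[ℂ] (X →L[ℂ] X)) (C : ℝ)
    (hC : IsRBoundedWith C {T : X →L[ℂ] X | ∃ z : Z, ‖z‖ ≤ 1 ∧ T = v z})
    (hcomm : ∀ (f : C(K, ℂ)) (z : Z), u f * v z = v z * u f) :
    ∃ w : C(K, Z) →L[ℂ] (X →L[ℂ] X),
      (∀ (f : C(K, ℂ)) (z : Z), w (tensorCM f z) = u f ∘L v z) ∧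
      ‖w‖ ≤ ‖u‖ ^ 2 * C ∧
      ∀ w' : C(K, Z) →L[ℂ] (X →L[ℂ] X),
        (∀ (f : C(K, ℂ)) (z : Z), w' (tensorCM f z) = u f ∘L v z) → w' = w := by
  classical
  set jl : List (C(K,ℂ) × Z) → C(K,Z) := fun l => (l.map fun q => tensorCM q.1 q.2).sum with hjl
  set ψl : List (C(K,ℂ) × Z) → (X →L[ℂ] X) :=
    fun l => (l.map fun q => (u q.1).comp (v q.2)).sum with hψl
  have hbound : ∀ l, ‖ψl l‖ ≤ ‖u‖^2 * C * ‖jl l‖ := by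
    intro l
    rw [hψl, hjl]
    simp only
    rw [list_sum_fin (fun q : C(K,ℂ) × Z => (u q.1).comp (v q.2)) l,
        list_sum_fin (fun q : C(K,ℂ) × Z => tensorCM q.1 q.2) l]
    exact key_estimate u hu_one hu_mul v C hC hcomm (fun i => (l.get i).1) (fun i => (l.get i).2)
  have hMC0 : (0:ℝ) ≤ ‖u‖^2 * C := mul_nonneg (pow_nonneg (norm_nonneg u) 2) hC.1
  have hjl_nil : jl [] = 0 := by rw [hjl]; simp
  have hjl_cons : ∀ q L, jl (q :: L) = tensorCM q.1 q.2 + jl L := by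
    intro q L; rw [hjl]; simp
  have hψl_cons : ∀ q L, ψl (q :: L) = (u q.1).comp (v q.2) + ψl L := by
    intro q L; rw [hψl]; simp
  have hjl_append : ∀ l₁ l₂, jl (l₁ ++ l₂) = jl l₁ + jl l₂ := by
    intro l₁ l₂; rw [hjl]; simp
  have hψl_append : ∀ l₁ l₂, ψl (l₁ ++ l₂) = ψl l₁ + ψl l₂ := by
    intro l₁ l₂; rw [hψl]; simp
  have htsmul : ∀ (c : ℂ) (f0 : C(K,ℂ)) (z0 : Z), tensorCM (c • f0) z0 = c • tensorCM f0 z0 := by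
    intro c f0 z0
    ext t
    show ((c • f0) t) • z0 = c • (f0 t • z0)
    rw [ContinuousMap.smul_apply, smul_smul]
    rfl
  have husmul : ∀ (c : ℂ) (f0 : C(K,ℂ)) (z0 : Z),
      (u (c • f0)).comp (v z0) = c • ((u f0).comp (v z0)) := by
    intro c f0 z0
    rw [map_smul]
    ext x0
    simp
  have hjl_smul : ∀ (c : ℂ) (l), jl (l.map fun q => (c • q.1, q.2)) = c • jl l := by
    intro c l
    induction l with
    | nil => rw [hjl_nil]; show jl [] = c • 0; rw [hjl_nil, smul_zero]
    | cons q L ih =>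
      rw [List.map_cons, hjl_cons, hjl_cons, ih, smul_add]
      congr 1
      exact htsmul c q.1 q.2
  have hψl_smul : ∀ (c : ℂ) (l), ψl (l.map fun q => (c • q.1, q.2)) = c • ψl l := by
    intro c l
    induction l with
    | nil =>
      show ψl [] = c • ψl []
      rw [hψl]; simp
    | cons q L ih =>
      rw [List.map_cons, hψl_cons, hψl_cons, ih, smul_add]
      congr 1
      exact husmul c q.1 q.2
  have hrep : ∀ y : C(K,Z), y ∈ Submodule.span ℂ (tensorSet K Z) → ∃ l, jl l = y := by
    intro y hy
    refine Submodule.span_induction ?_ ?_ ?_ ?_ hy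
    · rintro g ⟨f0, z0, rfl⟩
      exact ⟨[(f0, z0)], by rw [hjl_cons, hjl_nil, add_zero]⟩
    · exact ⟨[], hjl_nil⟩
    · rintro y1 y2 _ _ ⟨l1, rfl⟩ ⟨l2, rfl⟩
      exact ⟨l1 ++ l2, hjl_append l1 l2⟩
    · rintro c y1 _ ⟨l1, rfl⟩
      exact ⟨l1.map fun q => (c • q.1, q.2), hjl_smul c l1⟩
  have hwd : ∀ l l', jl l = jl l' → ψl l = ψl l' := by
    intro l l' he
    have h0 : jl (l ++ (l'.map fun q => ((-1:ℂ) • q.1, q.2))) = 0 := by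
      rw [hjl_append, hjl_smul, he, neg_one_smul, add_neg_cancel]
    have hb := hbound (l ++ (l'.map fun q => ((-1:ℂ) • q.1, q.2)))
    rw [h0, norm_zero, mul_zero] at hb
    have h1 : ψl l + (-1:ℂ) • ψl l' = 0 := by
      have h2 := norm_le_zero_iff.mp hb
      rwa [hψl_append, hψl_smul] at h2
    rw [neg_one_smul] at h1
    have h3 : ψl l - ψl l' = 0 := by rwa [sub_eq_add_neg]
    exact sub_eq_zero.mp h3
  set S : Submodule ℂ C(K,Z) := Submodule.span ℂ (tensorSet K Z) with hS
  have hrep' : ∀ y : S, ∃ l, jl l = (y : C(K,Z)) := fun y => hrep y y.2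
  set w0f : S → (X →L[ℂ] X) := fun y => ψl (hrep' y).choose with hw0f
  have hw0f_eq : ∀ (y : S) (l), jl l = (y : C(K,Z)) → w0f y = ψl l := by
    intro y l hl
    rw [hw0f]
    exact hwd _ _ (by rw [(hrep' y).choose_spec, hl])
  have hw0add : ∀ y1 y2 : S, w0f (y1 + y2) = w0f y1 + w0f y2 := by
    intro y1 y2
    obtain ⟨l1, hl1⟩ := hrep' y1
    obtain ⟨l2, hl2⟩ := hrep' y2
    rw [hw0f_eq y1 l1 hl1, hw0f_eq y2 l2 hl2,
      hw0f_eq (y1+y2) (l1++l2) (by rw [hjl_append, hl1, hl2]; rfl), hψl_append]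
  have hw0smul : ∀ (c : ℂ) (y : S), w0f (c • y) = c • w0f y := by
    intro c y
    obtain ⟨l, hl⟩ := hrep' y
    rw [hw0f_eq y l hl,
      hw0f_eq (c • y) (l.map fun q => (c • q.1, q.2)) (by rw [hjl_smul, hl]; rfl), hψl_smul]
  set w0 : S →ₗ[ℂ] (X →L[ℂ] X) :=
    { toFun := w0f, map_add' := hw0add, map_smul' := hw0smul } with hw0
  have hw0app : ∀ y : S, w0 y = w0f y := fun y => rfl
  have hw0bound : ∀ y : S, ‖w0 y‖ ≤ (‖u‖^2 * C) * ‖y‖ := by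
    intro y
    obtain ⟨l, hl⟩ := hrep' y
    rw [hw0app, hw0f_eq y l hl]
    calc ‖ψl l‖ ≤ ‖u‖^2 * C * ‖jl l‖ := hbound l
      _ = (‖u‖^2*C) * ‖y‖ := by rw [hl, Submodule.norm_coe]
  set w0L : S →L[ℂ] (X →L[ℂ] X) := LinearMap.mkContinuous w0 (‖u‖^2 * C) hw0bound with hw0L
  have hw0Lapp : ∀ y : S, w0L y = w0f y := fun y => rfl
  set e : S →L[ℂ] C(K,Z) := S.subtypeL with he
  have heapp : ∀ y : S, e y = (y : C(K,Z)) := fun y => rfl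
  have hdense : DenseRange e := by
    have h1 : Set.range (e : S → C(K,Z)) = (S : Set C(K,Z)) := Subtype.range_coe
    rw [DenseRange, h1]
    exact dense_tensor_span
  have hbnd : ∀ y : S, ‖y‖ ≤ ((1:NNReal) : ℝ) * ‖e y‖ := by
    intro y
    rw [NNReal.coe_one, one_mul, heapp, Submodule.norm_coe]
  set w : C(K,Z) →L[ℂ] (X →L[ℂ] X) :=
    w0L.extend e
    with hw
  have hwe : ∀ y : S, w (e y) = w0L y := by
    intro y
    rw [hw]
    exact ContinuousLinearMap.extend_eq w0L hdense
      (ContinuousLinearMap.isUniformEmbedding_of_bound e hbnd).isUniformInducing y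
  have hwnorm : ‖w‖ ≤ ‖u‖^2 * C := by
    have h1 := ContinuousLinearMap.opNorm_extend_le w0L hdense hbnd
    rw [NNReal.coe_one, one_mul] at h1
    calc ‖w‖ ≤ ‖w0L‖ := h1
      _ ≤ ‖u‖^2 * C := LinearMap.mkContinuous_norm_le w0 hMC0 hw0bound
  have hwtensor : ∀ (f0 : C(K,ℂ)) (z0 : Z), w (tensorCM f0 z0) = (u f0).comp (v z0) := by
    intro f0 z0
    have hmem : tensorCM f0 z0 ∈ S := Submodule.subset_span ⟨f0, z0, rfl⟩
    have h1 : tensorCM f0 z0 = e (⟨tensorCM f0 z0, hmem⟩ : S) := rfl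
    rw [h1, hwe, hw0Lapp, hw0f_eq _ [(f0, z0)] (by rw [hjl_cons, hjl_nil, add_zero]),
      hψl_cons, hψl]
    simp
  refine ⟨w, hwtensor, hwnorm, ?_⟩
  intro w' hw'
  have heqS : ∀ y ∈ S, w' y = w y := by
    intro y hy
    refine Submodule.span_induction ?_ ?_ ?_ ?_ hy
    · rintro g ⟨f0, z0, rfl⟩
      rw [hw' f0 z0, hwtensor f0 z0]
    · rw [map_zero, map_zero]
    · intro y1 y2 _ _ h1 h2
      rw [map_add, map_add, h1, h2]
    · intro c y1 _ h1
      rw [map_smul, map_smul, h1]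
  have hfun : ⇑w' = ⇑w := by
    apply Continuous.ext_on dense_tensor_span w'.continuous w.continuous
    intro y hy
    exact heqS y hy
  exact ContinuousLinearMap.ext (fun F => congrFun hfun F)

end Final


end DotProd

/-- Let `u : C(K) → B(X)` be a bounded unital homomorphism and `v : Z → B(X)` a bounded
linear map whose image of the unit ball is `R`-bounded with bound `C`, commuting with `u`.
Then there is a unique bounded linear map `u·v : C(K; Z) → B(X)` with
`(u·v)(f ⊗ z) = u(f) v(z)`, and `‖u·v‖ ≤ ‖u‖² C`. -/
theorem exists_unique_dot_extension {K : Type*} [TopologicalSpace K] [CompactSpace K]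
    {X : Type*} [NormedAddCommGroup X] [NormedSpace ℂ X] [CompleteSpace X]
    {Z : Type*} [NormedAddCommGroup Z] [NormedSpace ℂ Z]
    (u : C(K, ℂ) →L[ℂ] (X →L[ℂ] X))
    (hu_one : u 1 = 1) (hu_mul : ∀ f g : C(K, ℂ), u (f * g) = u f * u g)
    (v : Z →L[ℂ] (X →L[ℂ] X)) (C : ℝ)
    (hC : IsRBoundedWith C {T : X →L[ℂ] X | ∃ z : Z, ‖z‖ ≤ 1 ∧ T = v z})
    (hcomm : ∀ (f : C(K, ℂ)) (z : Z), u f * v z = v z * u f) :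
    ∃ w : C(K, Z) →L[ℂ] (X →L[ℂ] X),
      (∀ (f : C(K, ℂ)) (z : Z), w (tensorCM f z) = u f ∘L v z) ∧
      ‖w‖ ≤ ‖u‖ ^ 2 * C ∧
      ∀ w' : C(K, Z) →L[ℂ] (X →L[ℂ] X),
        (∀ (f : C(K, ℂ)) (z : Z), w' (tensorCM f z) = u f ∘L v z) → w' = w := by
  exact DotProd.final_thm u hu_one hu_mul v C hC hcomm
end

section
/- Let A be a sectorial operator on a Banach space X with ω(A) = 0 having a uniformly bounded H^∞-calculus with constant C, i.e. ‖f(A)‖ ≤ C ‖f‖_{∞,θ} for all θ > 0 and f ∈ H^∞_0(Σ_θ). Then for every f ∈ H^∞_0(Σ_θ) (any θ > 0), ‖f(A)‖ ≤ C ‖f‖_{∞,0}, where ‖f‖_{∞,0} = sup_{t>0} |f(t)| is the supremum over the positive real half-line only. -/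
open Real

/-- The open sector `Σ_θ = {r e^{iφ} : r > 0, |φ| < θ}` in the complex plane. -/
def Sector (θ : ℝ) : Set ℂ := {z : ℂ | z ≠ 0 ∧ |Complex.arg z| < θ}

/-- `f ∈ H^∞_0(Σ_θ)`: `f` is analytic on `Σ_θ` and satisfies the decay estimate
`|f(λ)| ≤ M min(|λ|^ε, |λ|^{-ε})` for some `ε, M > 0`. -/
def HinfZeroOn (f : ℂ → ℂ) (θ : ℝ) : Prop :=
  DifferentiableOn ℂ f (Sector θ) ∧
    ∃ ε > (0 : ℝ), ∃ M : ℝ, ∀ z ∈ Sector θ,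
      ‖f z‖ ≤ M * min (‖z‖ ^ ε) (‖z‖ ^ (-ε))

/-- Let `A` be a sectorial operator with `ω(A) = 0` having a uniformly bounded
`H^∞`-calculus with constant `C`, so that for a fixed `f ∈ H^∞_0(Σ_{θ₀})` the operator
`T = f(A)` satisfies `‖T‖ ≤ C ‖f‖_{∞,θ}` for every `0 < θ ≤ θ₀` (the value of the
calculus not depending on the sector on which `f` is restricted). Then
`‖f(A)‖ ≤ C ‖f‖_{∞,0}`, the supremum of `|f|` over the positive real half-line only. -/
theorem norm_le_of_uniformly_bounded_calculus {X : Type*} [NormedAddCommGroup X]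
    [NormedSpace ℂ X] [CompleteSpace X] (C : ℝ) (hC : 0 ≤ C)
    (θ₀ : ℝ) (hθ₀ : 0 < θ₀) (hθ₀' : θ₀ < π)
    (f : ℂ → ℂ) (hf : HinfZeroOn f θ₀) (T : X →L[ℂ] X)
    (hT : ∀ θ : ℝ, 0 < θ → θ ≤ θ₀ →
      ‖T‖ ≤ C * sSup ((fun z : ℂ => ‖f z‖) '' Sector θ)) :
    ‖T‖ ≤ C * sSup ((fun t : ℝ => ‖f (t : ℂ)‖) '' Set.Ioi (0 : ℝ)) := by
  obtain ⟨hfd, ε, hε, M, hM⟩ := hf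
  have hreal_mem : ∀ t : ℝ, 0 < t → ∀ θ : ℝ, 0 < θ → (t : ℂ) ∈ Sector θ := by
    intro t ht θ hθ
    refine ⟨by exact_mod_cast ht.ne', ?_⟩
    rw [Complex.arg_ofReal_of_nonneg ht.le]
    simpa using hθ
  have hone : (1 : ℂ) ∈ Sector θ₀ := by
    simpa using hreal_mem 1 one_pos θ₀ hθ₀
  have hMnn : 0 ≤ M := by
    have h := hM 1 hone
    simp [Real.one_rpow] at h
    exact le_trans (norm_nonneg _) h
  have hmin_le_one : ∀ z : ℂ, min (‖z‖ ^ ε) (‖z‖ ^ (-ε)) ≤ 1 := by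
    intro z
    rcases le_or_gt ‖z‖ 1 with h | h
    · exact le_trans (min_le_left _ _) (Real.rpow_le_one (norm_nonneg z) h hε.le)
    · exact le_trans (min_le_right _ _)
        (Real.rpow_le_one_of_one_le_of_nonpos h.le (by linarith))
  have hfb : ∀ z ∈ Sector θ₀, ‖f z‖ ≤ M := fun z hz =>
    (hM z hz).trans (mul_le_of_le_one_right hMnn (hmin_le_one z))
  set S := sSup ((fun t : ℝ => ‖f (t : ℂ)‖) '' Set.Ioi (0 : ℝ)) with hSdef
  have hbdd : BddAbove ((fun t : ℝ => ‖f (t : ℂ)‖) '' Set.Ioi (0 : ℝ)) := by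
    refine ⟨M, ?_⟩
    rintro x ⟨t, ht, rfl⟩
    exact hfb _ (hreal_mem t ht θ₀ hθ₀)
  have hSle : ∀ t : ℝ, 0 < t → ‖f (t : ℂ)‖ ≤ S := fun t ht => le_csSup hbdd ⟨t, ht, rfl⟩
  have hS0 : 0 ≤ S := le_trans (norm_nonneg _) (hSle 1 one_pos)
  have key : ∀ e : ℝ, 0 < e → ‖T‖ ≤ C * (S + e) := by
    intro e he
    have hMp : (0 : ℝ) < M + 1 := by linarith
    set δ : ℝ := min ((e / (M + 1)) ^ (1 / ε)) 1 with hδdef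
    have hδ0 : 0 < δ := lt_min (Real.rpow_pos_of_pos (div_pos he hMp) _) one_pos
    have hδ1 : δ ≤ 1 := min_le_right _ _
    have hδe : M * δ ^ ε ≤ e := by
      have h1 : δ ^ ε ≤ ((e / (M + 1)) ^ (1 / ε)) ^ ε :=
        Real.rpow_le_rpow hδ0.le (min_le_left _ _) hε.le
      have h2 : ((e / (M + 1)) ^ (1 / ε)) ^ ε = e / (M + 1) := by
        rw [← Real.rpow_mul (div_pos he hMp).le, one_div_mul_cancel hε.ne', Real.rpow_one]
      have h3 : M * (e / (M + 1)) ≤ e := by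
        rw [← mul_div_assoc, div_le_iff₀ hMp]
        nlinarith
      calc M * δ ^ ε ≤ M * (e / (M + 1)) := by
            exact mul_le_mul_of_nonneg_left (h1.trans_eq h2) hMnn
        _ ≤ e := h3
    set R : ℝ := δ⁻¹ with hRdef
    have hR0 : 0 < R := inv_pos.mpr hδ0
    have hδR : δ ≤ R := by
      calc δ ≤ 1 := hδ1
        _ ≤ R := by rw [hRdef]; exact (one_le_inv₀ hδ0).mpr hδ1
    -- the compact set
    set K : Set ℂ := {z : ℂ | δ ≤ ‖z‖} ∩
      ({z : ℂ | ‖z‖ ≤ R} ∩ {z : ℂ | ‖z‖ * Real.cos (θ₀ / 2) ≤ z.re})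
      with hKdef
    have hKclosed : IsClosed K := by
      refine IsClosed.inter (isClosed_le continuous_const continuous_norm) ?_
      exact IsClosed.inter (isClosed_le continuous_norm continuous_const)
        (isClosed_le (continuous_norm.mul continuous_const) Complex.continuous_re)
    have hKbdd : Bornology.IsBounded K := by
      refine (Metric.isBounded_closedBall (x := (0 : ℂ)) (r := R)).subset ?_
      rintro z ⟨-, hz2, -⟩
      simpa [Complex.dist_eq] using hz2
    have hKcomp : IsCompact K := Metric.isCompact_of_isClosed_isBounded hKclosed hKbdd
    have hKsub : K ⊆ Sector θ₀ := by
      rintro z ⟨hz1, hz2, hz3⟩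
      have hzabs : 0 < ‖z‖ := lt_of_lt_of_le hδ0 hz1
      have hzne : z ≠ 0 := by
        intro h; rw [h] at hzabs; simp at hzabs
      refine ⟨hzne, ?_⟩
      by_contra hcon
      push_neg at hcon
      have hlt : θ₀ / 2 < |Complex.arg z| := by linarith
      have hcos : Real.cos |Complex.arg z| < Real.cos (θ₀ / 2) :=
        Real.cos_lt_cos_of_nonneg_of_le_pi (by linarith) (Complex.abs_arg_le_pi z) hlt
      have hre : Complex.cos (Complex.arg z) = z.re / ‖z‖ := by
        exact_mod_cast Complex.cos_arg hzne
      have hre' : Real.cos (Complex.arg z) = z.re / ‖z‖ := by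
        exact_mod_cast hre
      have hge : Real.cos (θ₀ / 2) ≤ Real.cos (Complex.arg z) := by
        rw [hre', le_div_iff₀ hzabs, mul_comm]
        exact hz3
      rw [Real.cos_abs] at hcos
      linarith
    have hucont : UniformContinuousOn f K :=
      hKcomp.uniformContinuousOn_of_continuous ((hfd.continuousOn).mono hKsub)
    obtain ⟨d, hd0, hd⟩ := (Metric.uniformContinuousOn_iff).mp hucont e he
    set θ : ℝ := min (θ₀ / 2) (min 1 (d * δ / 4)) with hθdef
    have hθpos : 0 < θ := by
      refine lt_min (by linarith) (lt_min one_pos ?_)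
      positivity
    have hθle : θ ≤ θ₀ := le_trans (min_le_left _ _) (by linarith)
    have hθhalf : θ ≤ θ₀ / 2 := min_le_left _ _
    have hθ1 : θ ≤ 1 := le_trans (min_le_right _ _) (min_le_left _ _)
    have hθd : θ ≤ d * δ / 4 := le_trans (min_le_right _ _) (min_le_right _ _)
    have hsector : Sector θ ⊆ Sector θ₀ := by
      rintro z ⟨h1, h2⟩; exact ⟨h1, lt_of_lt_of_le h2 hθle⟩
    -- sup over Sector θ ≤ S + e
    have hsup : sSup ((fun z : ℂ => ‖f z‖) '' Sector θ) ≤ S + e := by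
      refine Real.sSup_le ?_ (by linarith)
      rintro x ⟨z, hz, rfl⟩
      have hz0 : 0 < ‖z‖ := by
        simpa [norm_pos_iff] using hz.1
      rcases le_or_gt ‖z‖ δ with hsmall | h1
      · -- small |z|
        have := hM z (hsector hz)
        have hmin : min (‖z‖ ^ ε) (‖z‖ ^ (-ε)) ≤ δ ^ ε :=
          le_trans (min_le_left _ _) (Real.rpow_le_rpow (norm_nonneg z) hsmall hε.le)
        have : ‖f z‖ ≤ M * δ ^ ε :=
          le_trans this (mul_le_mul_of_nonneg_left hmin hMnn)
        linarith [hδe]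
      rcases le_or_gt R ‖z‖ with hbig | h2
      · -- large |z|
        have hb := hM z (hsector hz)
        have hinv : ‖z‖⁻¹ ≤ δ := by
          rw [hRdef] at hbig
          calc ‖z‖⁻¹ ≤ (δ⁻¹)⁻¹ := by
                exact inv_anti₀ (inv_pos.mpr hδ0) hbig
            _ = δ := inv_inv δ
        have hmin : min (‖z‖ ^ ε) (‖z‖ ^ (-ε)) ≤ δ ^ ε := by
          refine le_trans (min_le_right _ _) ?_
          rw [Real.rpow_neg (norm_nonneg z), ← Real.inv_rpow (norm_nonneg z)]
          exact Real.rpow_le_rpow (by positivity) hinv hε.le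
        have : ‖f z‖ ≤ M * δ ^ ε :=
          le_trans hb (mul_le_mul_of_nonneg_left hmin hMnn)
        linarith [hδe]
      · -- middle range
        have hargle : |Complex.arg z| < θ := hz.2
        have hzK : z ∈ K := by
          refine ⟨h1.le, h2.le, ?_⟩
          have hcosle : Real.cos (θ₀ / 2) ≤ Real.cos (Complex.arg z) := by
            have h := Real.cos_le_cos_of_nonneg_of_le_pi (abs_nonneg (Complex.arg z))
              (by linarith) (le_of_lt (lt_of_lt_of_le hargle hθhalf))
            rwa [Real.cos_abs] at h
          have hre : Real.cos (Complex.arg z) = z.re / ‖z‖ := by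
            exact_mod_cast Complex.cos_arg hz.1
          show ‖z‖ * Real.cos (θ₀ / 2) ≤ z.re
          have h2' := mul_le_mul_of_nonneg_left hcosle (norm_nonneg z)
          rw [hre, mul_div_cancel₀ _ hz0.ne'] at h2'
          exact h2'
        set w : ℂ := ((‖z‖ : ℝ) : ℂ) with hwdef
        have hwabs : ‖w‖ = ‖z‖ := by
          rw [hwdef, Complex.norm_real, norm_norm]
        have hwK : w ∈ K := by
          refine ⟨?_, ?_, ?_⟩
          · show δ ≤ ‖w‖
            rw [hwabs]; exact h1.le
          · show ‖w‖ ≤ R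
            rw [hwabs]; exact h2.le
          · show ‖w‖ * Real.cos (θ₀ / 2) ≤ w.re
            rw [hwabs]
            have hwre : w.re = ‖z‖ := by rw [hwdef]; simp
            rw [hwre]
            exact mul_le_of_le_one_right hz0.le (Real.cos_le_one _)
        have hdist : dist z w < d := by
          have hzeq : z = (‖z‖ : ℂ) * Complex.exp (Complex.arg z * Complex.I) :=
            (Complex.norm_mul_exp_arg_mul_I z).symm
          have hsub : z - w = (‖z‖ : ℂ) * (Complex.exp (Complex.arg z * Complex.I) - 1) := by
            rw [hwdef]
            nth_rewrite 1 [hzeq]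
            ring
          have habsarg : ‖(Complex.arg z : ℂ) * Complex.I‖ = |Complex.arg z| := by
            simp
          have hexp : ‖Complex.exp (Complex.arg z * Complex.I) - 1‖ ≤
              2 * |Complex.arg z| := by
            have := Complex.norm_exp_sub_one_le (x := (Complex.arg z : ℂ) * Complex.I)
              (by rw [habsarg]; exact le_trans hargle.le hθ1)
            rwa [habsarg] at this
          have : dist z w ≤ ‖z‖ * (2 * |Complex.arg z|) := by
            rw [Complex.dist_eq, hsub, norm_mul, Complex.norm_real, norm_norm]
            exact mul_le_mul_of_nonneg_left hexp hz0.le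
          have hδinv : δ * R = 1 := mul_inv_cancel₀ hδ0.ne'
          have harg2 : |Complex.arg z| < d * δ / 4 := lt_of_lt_of_le hargle hθd
          have h3 : ‖z‖ * (2 * |Complex.arg z|) < d := by
            have habs2 : ‖z‖ ≤ R := h2.le
            nlinarith [abs_nonneg (Complex.arg z), hz0, hd0, hδ0, hR0]
          linarith
        have hfe : dist (f z) (f w) < e := hd z hzK w hwK hdist
        have hfw : ‖f w‖ ≤ S := hSle ‖z‖ hz0
        have : ‖f z‖ - ‖f w‖ ≤ dist (f z) (f w) := by
          rw [dist_eq_norm]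
          exact norm_sub_norm_le _ _
        linarith
    have := hT θ hθpos hθle
    calc ‖T‖ ≤ C * sSup ((fun z : ℂ => ‖f z‖) '' Sector θ) := this
      _ ≤ C * (S + e) := mul_le_mul_of_nonneg_left hsup hC
  -- conclude
  refine le_of_forall_pos_le_add ?_
  intro d hd
  rcases eq_or_lt_of_le hC with hCeq | hCpos
  · have := hT θ₀ hθ₀ le_rfl
    rw [← hCeq] at this ⊢
    simpa using le_trans this (by simp [hd.le])
  · have := key (d / C) (div_pos hd hCpos)
    calc ‖T‖ ≤ C * (S + d / C) := this
      _ = C * S + d := by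
            rw [mul_add, mul_comm C (d / C), div_mul_cancel₀ d hCpos.ne']
end

section
/- Let A = [[1,1],[0,1]] on ℓ²_2. Then A does not have a uniformly bounded H^∞-calculus: there is no constant C such that ‖f(A)‖ ≤ C sup_{t>0}|f(t)| for all θ > 0 and all f ∈ H^∞_0(Σ_θ). More concretely, for f_s(λ) = h(λ)λ^{is} with h ∈ H^∞_0(Σ_{π/2}) fixed, h(1)=1, the ratio ‖f_s(A)‖ / ‖f_s‖_{∞,0} ≥ |h'(1) + is| / ‖h‖_{∞,0} → ∞ as s → ∞. -/
open Real

/-- For the Jordan block `A = [[1,1],[0,1]]` on `ℓ²_2` and `f` analytic near `1`,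
the functional calculus gives `f(A) = [[f(1), f'(1)],[0, f(1)]]`, as an operator
on the two-dimensional Hilbert space. -/
noncomputable def jordanCalc (f : ℂ → ℂ) :
    EuclideanSpace ℂ (Fin 2) →L[ℂ] EuclideanSpace ℂ (Fin 2) :=
  Matrix.toEuclideanCLM (𝕜 := ℂ) !![f 1, deriv f 1; 0, f 1]

section aux

variable (s : ℝ)

noncomputable def testF (s : ℝ) (z : ℂ) : ℂ := z / (1 + z) ^ 2 * z ^ (Complex.I * s)

lemma sector_re_pos {z : ℂ} (hz : z ∈ Sector (π / 2)) : 0 < z.re := by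
  rcases hz with ⟨h0, harg⟩
  rcases Complex.abs_arg_lt_pi_div_two_iff.mp harg with h | h
  · exact h
  · exact absurd h h0

lemma one_add_ne {z : ℂ} (hz : z ∈ Sector (π / 2)) : (1 + z) ≠ 0 := by
  intro h
  have := sector_re_pos hz
  have : (1 + z).re = 1 + z.re := by simp
  rw [h] at this
  simp at this
  linarith [sector_re_pos hz]

lemma testF_hasDerivAt : HasDerivAt (testF s) (Complex.I * s / 4) 1 := by
  have h1 : HasDerivAt (fun z : ℂ => z / (1 + z) ^ 2) 0 1 := by
    have hd : HasDerivAt (fun z : ℂ => (1 + z) ^ 2) (2 * (1 + 1)) 1 := by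
      have : HasDerivAt (fun z : ℂ => 1 + z) 1 1 := by
        simpa using (hasDerivAt_id (1:ℂ)).const_add 1
      simpa using this.fun_pow 2
    have := (hasDerivAt_id (1:ℂ)).fun_div hd (by norm_num)
    refine this.congr_deriv ?_
    norm_num
  have h2 : HasDerivAt (fun z : ℂ => z ^ (Complex.I * s)) (Complex.I * s) 1 := by
    have := Complex.hasStrictDerivAt_cpow_const (c := Complex.I * s)
      (x := 1) (by simp [Complex.mem_slitPlane_iff])
    simpa using this.hasDerivAt
  have := h1.fun_mul h2
  refine this.congr_deriv ?_
  have : (1:ℂ) ^ (Complex.I * (s:ℂ)) = 1 := Complex.one_cpow _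
  rw [this]
  norm_num
  ring

lemma testF_one : testF s 1 = 1 / 4 := by
  simp [testF, Complex.one_cpow]
  norm_num

lemma testF_mem : HinfZeroOn (testF s) (π / 2) := by
  constructor
  · intro z hz
    have h1 : DifferentiableAt ℂ (fun z : ℂ => z / (1 + z) ^ 2) z := by
      apply DifferentiableAt.div (differentiableAt_id) (by fun_prop)
      exact pow_ne_zero 2 (one_add_ne hz)
    have h2 : DifferentiableAt ℂ (fun z : ℂ => z ^ (Complex.I * s)) z := by
      refine (Complex.hasStrictDerivAt_cpow_const ?_).hasDerivAt.differentiableAt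
      exact Complex.mem_slitPlane_iff.mpr (Or.inl (sector_re_pos hz))
    exact ((h1.mul h2)).differentiableWithinAt
  · refine ⟨1, one_pos, Real.exp (π / 2 * |s|), fun z hz => ?_⟩
    have hz0 : z ≠ 0 := hz.1
    have habs : 0 < ‖z‖ := norm_pos_iff.mpr hz0
    have hre : 0 < z.re := sector_re_pos hz
    -- bound on |z^(is)|
    have hcpow : ‖z ^ (Complex.I * (s:ℂ))‖ ≤ Real.exp (π / 2 * |s|) := by
      have hre0 : (Complex.I * (s:ℂ)).re = 0 := by simp
      have him0 : (Complex.I * (s:ℂ)).im = s := by simp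
      rw [Complex.norm_cpow_of_ne_zero hz0, hre0, him0, Real.rpow_zero, one_div, ← Real.exp_neg]
      apply Real.exp_le_exp.mpr
      have := hz.2
      calc -(Complex.arg z * s) ≤ |Complex.arg z * s| := neg_le_abs _
        _ = |Complex.arg z| * |s| := abs_mul _ _
        _ ≤ π / 2 * |s| := by
            apply mul_le_mul_of_nonneg_right (le_of_lt this) (abs_nonneg s)
    have hsq : ‖1 + z‖ ^ 2 = 1 + 2 * z.re + ‖z‖ ^ 2 := by
      rw [Complex.sq_norm, Complex.sq_norm, Complex.normSq_apply, Complex.normSq_apply]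
      simp [Complex.add_re, Complex.add_im]
      ring
    have hb1 : ‖z‖ / ‖1 + z‖ ^ 2 ≤ ‖z‖ := by
      rw [div_le_iff₀ (by rw [hsq]; nlinarith [Complex.sq_norm z, Complex.normSq_nonneg z])]
      nlinarith [habs, hre, Complex.sq_norm z]
    have hb2 : ‖z‖ / ‖1 + z‖ ^ 2 ≤ ‖z‖⁻¹ := by
      rw [div_le_iff₀ (by nlinarith [hsq, habs]), inv_mul_eq_div, le_div_iff₀ habs]
      nlinarith [hsq, habs, hre]
    have hnorm : ‖testF s z‖ = ‖z‖ / ‖1 + z‖ ^ 2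
        * ‖z ^ (Complex.I * (s:ℂ))‖ := by
      simp [testF, norm_mul, norm_div, norm_pow]
    rw [hnorm]
    rw [Real.rpow_one, Real.rpow_neg_one]
    have hmin : ‖z‖ / ‖1 + z‖ ^ 2
        ≤ min (‖z‖) ‖z‖⁻¹ := le_min hb1 hb2
    calc ‖z‖ / ‖1 + z‖ ^ 2 * ‖z ^ (Complex.I * (s:ℂ))‖
        ≤ min (‖z‖) ‖z‖⁻¹ * Real.exp (π / 2 * |s|) := by
          apply mul_le_mul hmin hcpow (by positivity)
          positivity
      _ = Real.exp (π / 2 * |s|) * min (‖z‖) ‖z‖⁻¹ := mul_comm _ _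

end aux

/-- The operator `A = [[1,1],[0,1]]` on `ℓ²_2` does not have a uniformly bounded
`H^∞`-calculus: there is no constant `C` such that `‖f(A)‖ ≤ C sup_{t>0} |f(t)|`
for all `θ > 0` and all `f ∈ H^∞_0(Σ_θ)`. -/
theorem jordan_block_no_uniformly_bounded_calculus :
    ¬ ∃ C : ℝ, ∀ θ : ℝ, 0 < θ → θ < π → ∀ f : ℂ → ℂ, HinfZeroOn f θ →
      ‖jordanCalc f‖ ≤ C * sSup ((fun t : ℝ => ‖f (t : ℂ)‖) '' Set.Ioi (0 : ℝ)) := by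
  rintro ⟨C, hC⟩
  set s : ℝ := 4 * |C| + 4 with hs
  have hspos : 0 < s := by positivity
  have key := hC (π / 2) (by positivity) (by linarith [pi_pos]) (testF s) (testF_mem s)
  -- deriv value
  have hderiv : deriv (testF s) 1 = Complex.I * s / 4 := (testF_hasDerivAt s).deriv
  -- sSup bound
  set S := sSup ((fun t : ℝ => ‖testF s (t : ℂ)‖) '' Set.Ioi (0 : ℝ)) with hSdef
  have hbound : ∀ x ∈ ((fun t : ℝ => ‖testF s (t : ℂ)‖) '' Set.Ioi (0 : ℝ)), x ≤ 1 / 4 := by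
    rintro x ⟨t, ht, rfl⟩
    have ht0 : (0:ℝ) < t := ht
    have htC : (t:ℂ) ∈ Sector (π / 2) := by
      constructor
      · exact_mod_cast ht0.ne'
      · rw [Complex.arg_ofReal_of_nonneg ht0.le]
        simp only [abs_zero]
        positivity
    have h1 : ‖testF s (t:ℂ)‖ = t / (1 + t) ^ 2 * ‖(t:ℂ) ^ (Complex.I * (s:ℂ))‖ := by
      simp only [testF, norm_mul, norm_div, norm_pow]
      rw [show ((1:ℂ) + t) = ((1 + t : ℝ) : ℂ) by push_cast; ring]
      rw [Complex.norm_real, Complex.norm_real, Real.norm_eq_abs, Real.norm_eq_abs, abs_of_pos ht0, abs_of_pos (by linarith : (0:ℝ) < 1 + t)]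
    have h2 : ‖(t:ℂ) ^ (Complex.I * (s:ℂ))‖ = 1 := by
      rw [Complex.norm_cpow_of_ne_zero (by exact_mod_cast ht0.ne')]
      rw [Complex.arg_ofReal_of_nonneg ht0.le]
      simp
    show ‖testF s (t:ℂ)‖ ≤ 1 / 4
    rw [h1, h2, mul_one, div_le_iff₀ (by positivity)]
    nlinarith [sq_nonneg (1 - t)]
  have hSle : S ≤ 1 / 4 := Real.sSup_le hbound (by norm_num)
  have hS0 : 0 ≤ S := by
    have : ‖testF s (1:ℝ)‖ ∈ ((fun t : ℝ => ‖testF s (t : ℂ)‖) '' Set.Ioi (0 : ℝ)) :=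
      ⟨1, by norm_num, rfl⟩
    have hub : BddAbove ((fun t : ℝ => ‖testF s (t : ℂ)‖) '' Set.Ioi (0 : ℝ)) :=
      ⟨1/4, hbound⟩
    exact le_trans (norm_nonneg _) (le_csSup hub this)
  -- lower bound on the operator norm
  have hlow : s / 4 ≤ ‖jordanCalc (testF s)‖ := by
    have hv : ‖(EuclideanSpace.single 1 (1:ℂ) : EuclideanSpace ℂ (Fin 2))‖ = 1 := by
      simp [EuclideanSpace.norm_single]
    have happly := (jordanCalc (testF s)).le_opNorm (EuclideanSpace.single 1 (1:ℂ))
    rw [hv, mul_one] at happly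
    refine le_trans ?_ happly
    -- compute the image
    set w := jordanCalc (testF s) (EuclideanSpace.single 1 (1:ℂ)) with hw
    have hinner : ‖(w : EuclideanSpace ℂ (Fin 2)) 0‖ ≤ ‖w‖ := by
      have hil := EuclideanSpace.inner_single_left (𝕜 := ℂ) (0 : Fin 2) 1 w
      have hle := norm_inner_le_norm (𝕜 := ℂ) (EuclideanSpace.single 0 (1:ℂ)) w
      rw [hil] at hle
      simpa [EuclideanSpace.norm_single] using hle
    refine le_trans ?_ hinner
    have hw0 : (w : EuclideanSpace ℂ (Fin 2)) 0 = deriv (testF s) 1 := by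
      rw [hw, jordanCalc]
      simp [Matrix.mulVec, dotProduct, Fin.sum_univ_two]
    rw [hw0, hderiv]
    rw [show Complex.I * (s:ℂ) / 4 = Complex.I * ((s/4 : ℝ):ℂ) by push_cast; ring]
    simp [abs_of_pos hspos]
  -- combine
  have : s / 4 ≤ C * S := le_trans hlow key
  have hCS : C * S ≤ |C| * (1/4) := by
    calc C * S ≤ |C| * S := mul_le_mul_of_nonneg_right (le_abs_self C) hS0
      _ ≤ |C| * (1/4) := mul_le_mul_of_nonneg_left hSle (abs_nonneg C)
  rw [hs] at this
  nlinarith [this, hCS]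
end
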